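/- arXiv:2509.04212 — 4 statements merged into one kernel-verified Lean document; each statement's English description precedes it below -/
import Mathlib

section
/- Let (c_j)_{j≥0} be a sequence of complex numbers of modulus 1 and, for n ≥ 1, set P_n(z) = (1/√n) ∑_{j=0}^{n−1} c_j z^j for |z| = 1. Then the sequence (P_n) is not ultraflat, i.e. sup_{z ∈ S¹} | |P_n(z)| − 1 | does not converge to 0 as n → ∞. -/
open Filter MeasureTheory Finset Complex Real


noncomputable def stE (j : ℕ) (t : ℝ) : ℂ := Complex.exp ((Complex.I * j) * t)

lemma stE_eq (j : ℕ) (t : ℝ) : Complex.exp (Complex.I * t) ^ j = stE j t := by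
  rw [stE, ← Complex.exp_nat_mul]; ring_nf

lemma hasDerivAt_stE (j : ℕ) (t : ℝ) :
    HasDerivAt (fun s : ℝ => stE j s) ((Complex.I * j) * stE j t) t := by
  have h1 : HasDerivAt (fun s : ℝ => ((Complex.I * j) * s : ℂ)) (Complex.I * j) t := by
    simpa using ((hasDerivAt_id (t : ℂ)).const_mul (Complex.I * (j:ℂ))).comp_ofReal
  simpa [stE, mul_comm] using h1.cexp

lemma continuous_stE (j : ℕ) : Continuous (stE j) :=
  Complex.continuous_exp.comp (continuous_const.mul Complex.continuous_ofReal)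

lemma stE_periodic (j : ℕ) : stE j (2 * π) = stE j 0 := by
  simp only [stE, Complex.ofReal_zero, mul_zero, Complex.exp_zero]
  rw [show Complex.I * (j:ℂ) * ((2 * π : ℝ) : ℂ) = (j : ℤ) * (2 * ↑π * Complex.I) by
    push_cast; ring]
  exact Complex.exp_int_mul_two_pi_mul_I j

lemma conj_stE (j : ℕ) (t : ℝ) :
    (starRingEnd ℂ) (stE j t) = Complex.exp (-(Complex.I * j) * t) := by
  rw [stE, ← Complex.exp_conj]
  congr 1
  simp only [map_mul, Complex.conj_ofReal, map_natCast, Complex.conj_I]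
  ring

lemma stE_mul_conj (j l : ℕ) (t : ℝ) :
    stE j t * (starRingEnd ℂ) (stE l t) = Complex.exp ((Complex.I * ((j:ℂ) - l)) * t) := by
  rw [stE, conj_stE, ← Complex.exp_add]
  congr 1; ring

lemma integral_stE_mul_conj (j l : ℕ) :
    (∫ t in (0:ℝ)..(2*π), stE j t * (starRingEnd ℂ) (stE l t)) =
      if j = l then (2*π : ℂ) else 0 := by
  by_cases h : j = l
  · subst h
    simp only [if_pos rfl]
    have : ∀ t : ℝ, stE j t * (starRingEnd ℂ) (stE j t) = 1 := by
      intro t; rw [stE_mul_conj]; simp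
    rw [intervalIntegral.integral_congr (fun t _ => this t)]
    simp
  · simp only [if_neg h]
    have hne : (Complex.I * ((j:ℂ) - l)) ≠ 0 := by
      simp only [ne_eq, mul_eq_zero, Complex.I_ne_zero, false_or, sub_eq_zero]
      exact_mod_cast fun hh => h (by exact_mod_cast hh)
    have := integral_exp_mul_complex (a := 0) (b := 2*π) hne
    rw [intervalIntegral.integral_congr (fun t _ => stE_mul_conj j l t), this]
    have h2 : Complex.exp (Complex.I * ((j:ℂ) - l) * ((2*π : ℝ):ℂ)) = 1 := by
      rw [show Complex.I * ((j:ℂ) - l) * ((2*π : ℝ):ℂ) = (((j:ℤ) - l : ℤ):ℂ) * (2 * ↑π * Complex.I) by push_cast; ring]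
      exact Complex.exp_int_mul_two_pi_mul_I _
    rw [h2]
    simp

lemma integral_parseval (a b : ℕ → ℂ) (n : ℕ) :
    (∫ t in (0:ℝ)..(2*π),
        (∑ j ∈ range n, a j * stE j t) * (starRingEnd ℂ) (∑ l ∈ range n, b l * stE l t))
      = 2*π * ∑ j ∈ range n, a j * (starRingEnd ℂ) (b j) := by
  have hexp : ∀ t : ℝ,
      (∑ j ∈ range n, a j * stE j t) * (starRingEnd ℂ) (∑ l ∈ range n, b l * stE l t)
      = ∑ j ∈ range n, ∑ l ∈ range n,
          (a j * (starRingEnd ℂ) (b l)) * (stE j t * (starRingEnd ℂ) (stE l t)) := by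
    intro t
    rw [map_sum, Finset.sum_mul_sum]
    refine Finset.sum_congr rfl fun j _ => Finset.sum_congr rfl fun l _ => ?_
    rw [map_mul]; ring
  have hint : ∀ j l : ℕ, IntervalIntegrable
      (fun t => (a j * (starRingEnd ℂ) (b l)) * (stE j t * (starRingEnd ℂ) (stE l t)))
      volume 0 (2*π) :=
    fun j l => (continuous_const.mul ((continuous_stE j).mul
      ((Complex.continuous_conj).comp (continuous_stE l)))).intervalIntegrable _ _
  rw [intervalIntegral.integral_congr (fun t _ => hexp t)]
  rw [intervalIntegral.integral_finset_sum
    (f := fun j t => ∑ l ∈ range n, (a j * (starRingEnd ℂ) (b l)) * (stE j t * (starRingEnd ℂ) (stE l t)))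
    (fun j _ => (continuous_finset_sum _ (fun l _ => continuous_const.mul ((continuous_stE j).mul
      ((Complex.continuous_conj).comp (continuous_stE l))))).intervalIntegrable _ _)]
  rw [Finset.sum_congr rfl (fun j (hj : j ∈ range n) => by
    rw [intervalIntegral.integral_finset_sum (fun l _ => hint j l),
      Finset.sum_congr rfl (fun l (_ : l ∈ range n) => by
        rw [intervalIntegral.integral_const_mul, integral_stE_mul_conj, mul_ite, mul_zero]),
      Finset.sum_ite_eq (range n) j (fun l => a j * (starRingEnd ℂ) (b l) * (2*↑π:ℂ)),
      if_pos hj] :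
    ∀ j ∈ range n, (∫ t in (0:ℝ)..(2*π), ∑ l ∈ range n,
        (a j * (starRingEnd ℂ) (b l)) * (stE j t * (starRingEnd ℂ) (stE l t)))
      = a j * (starRingEnd ℂ) (b j) * (2*↑π:ℂ))]
  rw [Finset.mul_sum]
  exact Finset.sum_congr rfl fun j _ => by ring

noncomputable def stu (c : ℕ → ℂ) (n : ℕ) (t : ℝ) : ℂ :=
  (1 / (Real.sqrt n : ℂ)) * ∑ j ∈ range n, c j * stE j t

noncomputable def stdu (c : ℕ → ℂ) (n : ℕ) (t : ℝ) : ℂ :=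
  (1 / (Real.sqrt n : ℂ)) * ∑ j ∈ range n, (c j * (Complex.I * j)) * stE j t

lemma hasDerivAt_stu (c : ℕ → ℂ) (n : ℕ) (t : ℝ) :
    HasDerivAt (stu c n) (stdu c n t) t := by
  have h : HasDerivAt (fun s => ∑ j ∈ range n, c j * stE j s)
      (∑ j ∈ range n, (c j * (Complex.I * j)) * stE j t) t := by
    refine HasDerivAt.fun_sum (fun j _ => ?_)
    have := (hasDerivAt_stE j t).const_mul (c j)
    simpa [mul_assoc] using this
  have e1 : stu c n = fun s => (1 / (Real.sqrt n : ℂ)) * ∑ j ∈ range n, c j * stE j s := rfl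
  rw [e1, stdu]
  simpa [one_div] using h.const_mul (1 / (Real.sqrt n : ℂ))

lemma continuous_stu (c : ℕ → ℂ) (n : ℕ) : Continuous (stu c n) :=
  continuous_const.mul (continuous_finset_sum _ fun j _ => continuous_const.mul (continuous_stE j))

lemma continuous_stdu (c : ℕ → ℂ) (n : ℕ) : Continuous (stdu c n) :=
  continuous_const.mul (continuous_finset_sum _ fun j _ => continuous_const.mul (continuous_stE j))

lemma stu_periodic (c : ℕ → ℂ) (n : ℕ) : stu c n (2*π) = stu c n 0 := by
  simp [stu, stE_periodic]

lemma sum_range_cast (n : ℕ) : ∑ j ∈ range n, (j : ℂ) = n * (n-1) / 2 := by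
  induction n with
  | zero => simp
  | succ m ih => rw [Finset.sum_range_succ, ih]; push_cast; ring

lemma sum_range_sq_le (n : ℕ) : ∑ j ∈ range n, (j : ℝ)^2 ≤ n^3 / 3 := by
  induction n with
  | zero => simp
  | succ m ih =>
    rw [Finset.sum_range_succ]
    push_cast
    nlinarith [ih, Nat.cast_nonneg (α := ℝ) m]

-- sqrt facts
lemma sqrt_ne_zero' {n : ℕ} (hn : 1 ≤ n) : ((Real.sqrt n : ℂ)) ≠ 0 := by
  simp only [ne_eq, Complex.ofReal_eq_zero]
  positivity

lemma integral_stdu_mul_conj_stu (c : ℕ → ℂ) (hc : ∀ j, ‖c j‖ = 1)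
    {n : ℕ} (hn : 1 ≤ n) :
    (∫ t in (0:ℝ)..(2*π), stdu c n t * (starRingEnd ℂ) (stu c n t))
      = Real.pi * Complex.I * (n - 1) := by
  have hmc : ∀ t, stdu c n t * (starRingEnd ℂ) (stu c n t)
      = ((1:ℂ)/((n:ℝ):ℂ)) * ((∑ j ∈ range n, (c j * (Complex.I * j)) * stE j t) *
          (starRingEnd ℂ) (∑ l ∈ range n, c l * stE l t)) := by
    intro t
    simp only [stdu, stu, map_mul, map_sum]
    have : (starRingEnd ℂ) (1 / (Real.sqrt n : ℂ)) = 1 / (Real.sqrt n : ℂ) := by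
      simp [Complex.conj_ofReal]
    rw [this]
    have h2 : (1 / (Real.sqrt n : ℂ)) * (1 / (Real.sqrt n : ℂ)) = 1/((n:ℝ):ℂ) := by
      rw [div_mul_div_comm, one_mul, ← Complex.ofReal_mul,
        Real.mul_self_sqrt (Nat.cast_nonneg n)]
    rw [← h2]
    ring
  rw [intervalIntegral.integral_congr (fun t _ => hmc t),
    intervalIntegral.integral_const_mul, integral_parseval]
  have hdiag : ∀ j ∈ range n, (c j * (Complex.I * j)) * (starRingEnd ℂ) (c j)
      = Complex.I * j := by
    intro j _
    have : c j * (starRingEnd ℂ) (c j) = 1 := by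
      rw [Complex.mul_conj]
      norm_cast
      simp [← Complex.sq_norm, hc j]
    calc (c j * (Complex.I * j)) * (starRingEnd ℂ) (c j)
        = (c j * (starRingEnd ℂ) (c j)) * (Complex.I * j) := by ring
      _ = Complex.I * j := by rw [this, one_mul]
  rw [Finset.sum_congr rfl hdiag, ← Finset.mul_sum, sum_range_cast]
  have hne : ((n:ℕ) : ℂ) ≠ 0 := Nat.cast_ne_zero.mpr (by omega)
  push_cast
  field_simp

lemma integral_normSq_stdu (c : ℕ → ℂ) (hc : ∀ j, ‖c j‖ = 1)
    {n : ℕ} (hn : 1 ≤ n) :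
    (∫ t in (0:ℝ)..(2*π), Complex.normSq (stdu c n t))
      = 2*π/n * ∑ j ∈ range n, (j:ℝ)^2 := by
  have hmc : ∀ t, ((Complex.normSq (stdu c n t) : ℝ) : ℂ)
      = ((1:ℂ)/((n:ℝ):ℂ)) * ((∑ j ∈ range n, (c j * (Complex.I * j)) * stE j t) *
          (starRingEnd ℂ) (∑ l ∈ range n, (c l * (Complex.I * l)) * stE l t)) := by
    intro t
    rw [← Complex.mul_conj]
    simp only [stdu, map_mul, map_sum]
    have hconj : (starRingEnd ℂ) (1 / (Real.sqrt n : ℂ)) = 1 / (Real.sqrt n : ℂ) := by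
      simp [Complex.conj_ofReal]
    rw [hconj]
    have h2 : (1 / (Real.sqrt n : ℂ)) * (1 / (Real.sqrt n : ℂ)) = 1/((n:ℝ):ℂ) := by
      rw [div_mul_div_comm, one_mul, ← Complex.ofReal_mul,
        Real.mul_self_sqrt (Nat.cast_nonneg n)]
    rw [← h2]
    ring
  have hint : (∫ t in (0:ℝ)..(2*π), ((Complex.normSq (stdu c n t) : ℝ) : ℂ))
      = ((2*π/n * ∑ j ∈ range n, (j:ℝ)^2 : ℝ) : ℂ) := by
    rw [intervalIntegral.integral_congr (fun t _ => hmc t),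
      intervalIntegral.integral_const_mul, integral_parseval]
    have hdiag : ∀ j ∈ range n, (c j * (Complex.I * j)) * (starRingEnd ℂ) (c j * (Complex.I * j))
        = ((j:ℝ)^2 : ℝ) := by
      intro j _
      rw [Complex.mul_conj]
      norm_cast
      simp [Complex.normSq_mul, Complex.normSq_eq_norm_sq, hc j]
      try ring
    rw [Finset.sum_congr rfl hdiag]
    have hne : ((n:ℕ) : ℂ) ≠ 0 := Nat.cast_ne_zero.mpr (by omega)
    push_cast
    field_simp
    try ring
  rw [intervalIntegral.integral_ofReal] at hint
  exact_mod_cast hint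

lemma integral_norm_stdu_le (c : ℕ → ℂ) (hc : ∀ j, ‖c j‖ = 1)
    {n : ℕ} (hn : 1 ≤ n) :
    (∫ t in (0:ℝ)..(2*π), ‖stdu c n t‖) ≤ 4*π*n/3 := by
  have hpos : (0:ℝ) < n := by exact_mod_cast hn
  have hptw : ∀ t : ℝ, ‖stdu c n t‖ ≤ Complex.normSq (stdu c n t) / (2*n) + n/2 := by
    intro t
    have h1 : Complex.normSq (stdu c n t) = ‖stdu c n t‖^2 := by
      rw [Complex.normSq_eq_norm_sq]
    rw [h1]
    rw [div_add' _ _ _ (by positivity), le_div_iff₀ (by positivity)]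
    nlinarith [sq_nonneg (‖stdu c n t‖ - n)]
  have hInt1 : IntervalIntegrable (fun t => ‖stdu c n t‖) volume 0 (2*π) :=
    ((continuous_stdu c n).norm).intervalIntegrable _ _
  have hInt2 : IntervalIntegrable (fun t => Complex.normSq (stdu c n t) / (2*n) + n/2) volume 0 (2*π) :=
    (((Complex.continuous_normSq.comp (continuous_stdu c n)).div_const _).add continuous_const).intervalIntegrable _ _
  have hmono := intervalIntegral.integral_mono_on (by positivity) hInt1 hInt2 (fun t _ => hptw t)
  have heval : (∫ t in (0:ℝ)..(2*π), (Complex.normSq (stdu c n t) / (2*n) + n/2))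
      = (2*π/n * ∑ j ∈ range n, (j:ℝ)^2) / (2*n) + (n/2) * (2*π) := by
    have hIa : IntervalIntegrable (fun t : ℝ => Complex.normSq (stdu c n t) / (2*(n:ℝ)))
        volume 0 (2*π) :=
      Continuous.intervalIntegrable
        ((Complex.continuous_normSq.comp (continuous_stdu c n)).div_const _) _ _
    rw [intervalIntegral.integral_add hIa intervalIntegrable_const,
      intervalIntegral.integral_div, integral_normSq_stdu c hc hn]
    simp
    ring
  rw [heval] at hmono
  have hsum := sum_range_sq_le n
  calc (∫ t in (0:ℝ)..(2*π), ‖stdu c n t‖)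
      ≤ (2*π/n * ∑ j ∈ range n, (j:ℝ)^2) / (2*n) + (n/2) * (2*π) := hmono
    _ ≤ (2*π/n * ((n:ℝ)^3/3)) / (2*n) + (n/2) * (2*π) := by
        have : (0:ℝ) ≤ 2*π/n := by positivity
        gcongr
    _ = π*n/3 + π*n := by field_simp
    _ = 4*π*n/3 := by ring

lemma norm_stE (j : ℕ) (t : ℝ) : ‖stE j t‖ = 1 := by
  rw [stE, show (Complex.I * j) * t = (((j:ℝ)*t : ℝ) : ℂ) * Complex.I by push_cast; ring,
    Complex.norm_exp_ofReal_mul_I]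

lemma sqrt_succ_sub_le {n : ℕ} (hn : 1 ≤ n) :
    Real.sqrt ((n:ℝ)+1) - Real.sqrt n ≤ 1/(2*Real.sqrt n) := by
  have hs : Real.sqrt n ^ 2 = n := Real.sq_sqrt (Nat.cast_nonneg n)
  have hs' : Real.sqrt ((n:ℝ)+1) ^ 2 = (n:ℝ)+1 := Real.sq_sqrt (by positivity)
  have hs0 : 0 < Real.sqrt n := Real.sqrt_pos.mpr (by exact_mod_cast hn)
  rw [sub_le_iff_le_add, div_add' _ _ _ (by positivity), le_div_iff₀ (by positivity)]
  nlinarith [sq_nonneg (Real.sqrt ((n:ℝ)+1) - Real.sqrt n), Real.sqrt_nonneg ((n:ℝ)+1)]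

lemma step_diff (c : ℕ → ℂ) (hc : ∀ j, ‖c j‖ = 1) {n : ℕ} (hn : 1 ≤ n)
    (hflat : ∀ t : ℝ, ‖stu c n t‖ ≤ 2) (t : ℝ) :
    ‖stu c (n+1) t - stu c n t‖ ≤ 2 / Real.sqrt n := by
  have hs0 : 0 < Real.sqrt n := Real.sqrt_pos.mpr (by exact_mod_cast hn)
  have hs0' : 0 < Real.sqrt ((n:ℝ)+1) := Real.sqrt_pos.mpr (by positivity)
  have hmono : Real.sqrt n ≤ Real.sqrt ((n:ℝ)+1) := Real.sqrt_le_sqrt (by linarith)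
  have hsneC : ((Real.sqrt n : ℝ) : ℂ) ≠ 0 := by
    simp only [ne_eq, Complex.ofReal_eq_zero]; positivity
  have hsneC' : ((Real.sqrt ((n:ℝ)+1) : ℝ) : ℂ) ≠ 0 := by
    simp only [ne_eq, Complex.ofReal_eq_zero]; positivity
  have hcast : ((n:ℕ)+1 : ℕ) = ((n:ℝ)+1 : ℝ) := by push_cast; ring
  have hid : stu c (n+1) t - stu c n t
      = (1 / ((Real.sqrt ((n:ℝ)+1) : ℝ) : ℂ)) * (c n * stE n t)
        + (((Real.sqrt n : ℝ) : ℂ) / ((Real.sqrt ((n:ℝ)+1) : ℝ) : ℂ) - 1) * stu c n t := by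
    have hS : (∑ j ∈ range (n+1), c j * stE j t)
        = (∑ j ∈ range n, c j * stE j t) + c n * stE n t := Finset.sum_range_succ _ _
    have hy : (∑ j ∈ range n, c j * stE j t) = ((Real.sqrt n : ℝ) : ℂ) * stu c n t := by
      rw [stu, ← mul_assoc, mul_one_div, div_self hsneC, one_mul]
    rw [stu, hS, hy, hcast]
    field_simp
    ring
  rw [hid]
  have hcn : ‖c n‖ = 1 := by rw [hc n]
  have h1 : ‖(1 / ((Real.sqrt ((n:ℝ)+1) : ℝ) : ℂ)) * (c n * stE n t)‖
      = 1 / Real.sqrt ((n:ℝ)+1) := by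
    rw [norm_mul, norm_mul, norm_stE, hcn, norm_div, norm_one, Complex.norm_real,
      Real.norm_eq_abs, _root_.abs_of_nonneg hs0'.le]
    ring
  have hfrac : (0:ℝ) ≤ 1 - Real.sqrt n / Real.sqrt ((n:ℝ)+1) := by
    rw [sub_nonneg, div_le_one hs0']; exact hmono
  have h2 : ‖(((Real.sqrt n : ℝ) : ℂ) / ((Real.sqrt ((n:ℝ)+1) : ℝ) : ℂ) - 1) * stu c n t‖
      ≤ (1 - Real.sqrt n / Real.sqrt ((n:ℝ)+1)) * 2 := by
    have hq : ((Real.sqrt n : ℝ) : ℂ) / ((Real.sqrt ((n:ℝ)+1) : ℝ) : ℂ) - 1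
        = (((Real.sqrt n / Real.sqrt ((n:ℝ)+1) - 1 : ℝ)) : ℂ) := by push_cast; ring
    rw [norm_mul, hq, Complex.norm_real, Real.norm_eq_abs,
      abs_of_nonpos (by linarith)]
    nlinarith [hflat t, norm_nonneg (stu c n t)]
  have h1le : 1 ≤ Real.sqrt n := by
    rw [show (1:ℝ) = Real.sqrt 1 by simp]
    exact Real.sqrt_le_sqrt (by exact_mod_cast hn)
  have hh : Real.sqrt n * Real.sqrt n = (n:ℝ) := Real.mul_self_sqrt (Nat.cast_nonneg n)
  calc ‖(1 / ((Real.sqrt ((n:ℝ)+1) : ℝ) : ℂ)) * (c n * stE n t)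
        + (((Real.sqrt n : ℝ) : ℂ) / ((Real.sqrt ((n:ℝ)+1) : ℝ) : ℂ) - 1) * stu c n t‖
      ≤ 1 / Real.sqrt ((n:ℝ)+1) + (1 - Real.sqrt n / Real.sqrt ((n:ℝ)+1)) * 2 := by
        refine (norm_add_le _ _).trans ?_
        rw [h1]; gcongr
    _ = 1 / Real.sqrt ((n:ℝ)+1)
        + ((Real.sqrt ((n:ℝ)+1) - Real.sqrt n) / Real.sqrt ((n:ℝ)+1)) * 2 := by
        rw [sub_div, div_self (ne_of_gt hs0')]
    _ ≤ 1 / Real.sqrt n + ((1 / (2 * Real.sqrt n)) / Real.sqrt n) * 2 := by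
        have ha := one_div_le_one_div_of_le hs0 hmono
        have hb := div_le_div₀ (by positivity) (sqrt_succ_sub_le hn) hs0 hmono
        nlinarith [hb]
    _ ≤ 2 / Real.sqrt n := by
        have h1n : 1 / (2 * Real.sqrt n) / Real.sqrt n * 2 = 1 / (n:ℝ) := by
          rw [div_div, mul_assoc, hh]
          field_simp
        rw [h1n]
        have hsn : Real.sqrt n ≤ (n:ℝ) := by nlinarith
        have h2n : 1/(n:ℝ) ≤ 1/Real.sqrt n := one_div_le_one_div_of_le hs0 hsn
        rw [show (2:ℝ)/Real.sqrt n = 1/Real.sqrt n + 1/Real.sqrt n by ring]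
        linarith

noncomputable def stV (c : ℕ → ℂ) (n : ℕ) : ℂ :=
  ∫ t in (0:ℝ)..(2*π), stdu c n t / stu c n t

lemma flat_bounds {c : ℕ → ℂ} {n : ℕ}
    (hflat : ∀ t : ℝ, |‖stu c n t‖ - 1| ≤ 1/100) (t : ℝ) :
    99/100 ≤ ‖stu c n t‖ ∧ ‖stu c n t‖ ≤ 2 ∧ stu c n t ≠ 0 := by
  have h := abs_le.mp (hflat t)
  refine ⟨by linarith [h.1], by linarith [h.2], ?_⟩
  intro h0
  rw [h0] at h
  simp at h
  linarith [h.1]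

lemma stV_step (c : ℕ → ℂ) (hc : ∀ j, ‖c j‖ = 1) {n : ℕ} (hn : 9 ≤ n)
    (hflat : ∀ t : ℝ, |‖stu c n t‖ - 1| ≤ 1/100)
    (hflat' : ∀ t : ℝ, |‖stu c (n+1) t‖ - 1| ≤ 1/100) :
    stV c (n+1) = stV c n := by
  have hn1 : 1 ≤ n := by omega
  have hs3 : (3:ℝ) ≤ Real.sqrt n := by
    rw [show (3:ℝ) = Real.sqrt 9 by
      rw [show (9:ℝ) = 3^2 by norm_num, Real.sqrt_sq (by norm_num)]]
    exact Real.sqrt_le_sqrt (by exact_mod_cast hn)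
  have hne : ∀ t, stu c n t ≠ 0 := fun t => (flat_bounds hflat t).2.2
  have hne' : ∀ t, stu c (n+1) t ≠ 0 := fun t => (flat_bounds hflat' t).2.2
  set w : ℝ → ℂ := fun t => stu c (n+1) t / stu c n t with hw
  have hwne1 : ∀ t, ‖w t - 1‖ ≤ 9/10 := by
    intro t
    have : w t - 1 = (stu c (n+1) t - stu c n t) / stu c n t := by
      rw [hw]
      field_simp [hne t]
    rw [this, norm_div]
    have hd := step_diff c hc hn1 (fun s => (flat_bounds hflat s).2.1) t
    have hlo := (flat_bounds hflat t).1
    have hd2 : ‖stu c (n+1) t - stu c n t‖ ≤ 2/3 := by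
      refine hd.trans ?_
      rw [div_le_div_iff₀ (by linarith) (by norm_num)]
      linarith
    rw [div_le_iff₀ (by linarith)]
    calc ‖stu c (n+1) t - stu c n t‖ ≤ 2/3 := hd2
      _ ≤ 9/10 * (99/100) := by norm_num
      _ ≤ 9/10 * ‖stu c n t‖ := by gcongr
  have hslit : ∀ t, w t ∈ Complex.slitPlane := by
    intro t
    rw [Complex.mem_slitPlane_iff]
    left
    have h1 : (w t).re = 1 + (w t - 1).re := by simp
    have h2 : -(‖w t - 1‖) ≤ (w t - 1).re := by
      have := Complex.abs_re_le_norm (w t - 1)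
      cases' abs_le.mp this with hl _
      linarith
    rw [h1]
    linarith [hwne1 t]
  have hwderiv : ∀ t : ℝ, HasDerivAt w
      ((stdu c (n+1) t * stu c n t - stu c (n+1) t * stdu c n t) / (stu c n t)^2) t :=
    fun t => (hasDerivAt_stu c (n+1) t).div (hasDerivAt_stu c n t) (hne t)
  set g : ℝ → ℂ := fun t => stdu c (n+1) t / stu c (n+1) t - stdu c n t / stu c n t with hg
  have hLderiv : ∀ t : ℝ, HasDerivAt (fun s => Complex.log (w s)) (g t) t := by
    intro t
    have h := (hwderiv t).clog_real (hslit t)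
    have heq : (stdu c (n+1) t * stu c n t - stu c (n+1) t * stdu c n t) / (stu c n t)^2 / w t
        = g t := by
      rw [hw, hg]
      have h1 := hne t
      have h2 := hne' t
      field_simp
    rwa [heq] at h
  have hgcont : Continuous g := by
    apply Continuous.sub
    · exact (continuous_stdu c (n+1)).div (continuous_stu c (n+1)) hne'
    · exact (continuous_stdu c n).div (continuous_stu c n) hne
  have hftc : (∫ t in (0:ℝ)..(2*π), g t)
      = Complex.log (w (2*π)) - Complex.log (w 0) := by
    exact intervalIntegral.integral_eq_sub_of_hasDerivAt
      (fun t _ => hLderiv t) (hgcont.intervalIntegrable _ _)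
  have hper : w (2*π) = w 0 := by rw [hw]; simp [stu_periodic]
  have hzero : (∫ t in (0:ℝ)..(2*π), g t) = 0 := by rw [hftc, hper, sub_self]
  have hsplit : (∫ t in (0:ℝ)..(2*π), g t) = stV c (n+1) - stV c n := by
    rw [hg, stV, stV]
    exact intervalIntegral.integral_sub
      (((continuous_stdu c (n+1)).div (continuous_stu c (n+1)) hne').intervalIntegrable _ _)
      (((continuous_stdu c n).div (continuous_stu c n) hne).intervalIntegrable _ _)
  have := hsplit ▸ hzero
  linear_combination this

lemma stV_est (c : ℕ → ℂ) (hc : ∀ j, ‖c j‖ = 1) {n : ℕ} (hn : 1 ≤ n)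
    (hflat : ∀ t : ℝ, |‖stu c n t‖ - 1| ≤ 1/100) :
    ‖stV c n - Real.pi * Complex.I * (n - 1)‖ ≤ π * n / 25 := by
  have hne : ∀ t, stu c n t ≠ 0 := fun t => (flat_bounds hflat t).2.2
  have hptw : ∀ t : ℝ, ‖stdu c n t / stu c n t - stdu c n t * (starRingEnd ℂ) (stu c n t)‖
      ≤ (3/100) * ‖stdu c n t‖ := by
    intro t
    have hid : stdu c n t / stu c n t - stdu c n t * (starRingEnd ℂ) (stu c n t)
        = stdu c n t * ((1 - stu c n t * (starRingEnd ℂ) (stu c n t)) / stu c n t) := by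
      field_simp [hne t]
    rw [hid, norm_mul, mul_comm]
    gcongr
    rw [Complex.mul_conj]
    have hr : Complex.normSq (stu c n t) = ‖stu c n t‖^2 := by
      rw [Complex.normSq_eq_norm_sq]
    rw [norm_div]
    have h1 : (1 : ℂ) - (Complex.normSq (stu c n t) : ℝ) = ((1 - Complex.normSq (stu c n t) : ℝ) : ℂ) := by
      push_cast; ring
    rw [h1, Complex.norm_real, Real.norm_eq_abs, hr]
    have hlo := (flat_bounds hflat t).1
    have habs := abs_le.mp (hflat t)
    rw [div_le_iff₀ (by linarith)]
    rw [abs_le]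
    constructor <;> nlinarith [habs.1, habs.2, hlo]
  have hInt1 : IntervalIntegrable (fun t => stdu c n t / stu c n t) volume 0 (2*π) :=
    (((continuous_stdu c n).div (continuous_stu c n) hne)).intervalIntegrable _ _
  have hInt2 : IntervalIntegrable (fun t => stdu c n t * (starRingEnd ℂ) (stu c n t)) volume 0 (2*π) :=
    ((continuous_stdu c n).mul ((Complex.continuous_conj).comp (continuous_stu c n))).intervalIntegrable _ _
  have hsplit : stV c n - Real.pi * Complex.I * (n-1)
      = ∫ t in (0:ℝ)..(2*π), (stdu c n t / stu c n t - stdu c n t * (starRingEnd ℂ) (stu c n t)) := by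
    rw [intervalIntegral.integral_sub hInt1 hInt2, integral_stdu_mul_conj_stu c hc hn, stV]
  rw [hsplit]
  have h2pi : (0:ℝ) ≤ 2*π := by positivity
  calc ‖∫ t in (0:ℝ)..(2*π), (stdu c n t / stu c n t - stdu c n t * (starRingEnd ℂ) (stu c n t))‖
      ≤ ∫ t in (0:ℝ)..(2*π), ‖stdu c n t / stu c n t - stdu c n t * (starRingEnd ℂ) (stu c n t)‖ :=
        intervalIntegral.norm_integral_le_integral_norm h2pi
    _ ≤ ∫ t in (0:ℝ)..(2*π), (3/100) * ‖stdu c n t‖ := by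
        apply intervalIntegral.integral_mono_on h2pi _ _ (fun t _ => hptw t)
        · exact (Continuous.norm (((continuous_stdu c n).div (continuous_stu c n) hne).sub
            ((continuous_stdu c n).mul ((Complex.continuous_conj).comp (continuous_stu c n))))).intervalIntegrable _ _
        · exact (continuous_const.mul ((continuous_stdu c n).norm)).intervalIntegrable _ _
    _ = (3/100) * ∫ t in (0:ℝ)..(2*π), ‖stdu c n t‖ := intervalIntegral.integral_const_mul _ _
    _ ≤ (3/100) * (4*π*n/3) := by
        have := integral_norm_stdu_le c hc hn
        gcongr
    _ ≤ π * n / 25 := by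
        rw [show (3:ℝ)/100 * (4*π*n/3) = π*n/25 by ring]

lemma stu_norm_le (c : ℕ → ℂ) (hc : ∀ j, ‖c j‖ = 1) (n : ℕ) (t : ℝ) :
    ‖stu c n t‖ ≤ n := by
  rcases Nat.eq_zero_or_pos n with h | h
  · subst h; simp [stu]
  · rw [stu, norm_mul]
    have h1 : ‖(1 : ℂ) / ((Real.sqrt n : ℝ) : ℂ)‖ ≤ 1 := by
      rw [norm_div, norm_one, Complex.norm_real, Real.norm_eq_abs,
        _root_.abs_of_nonneg (Real.sqrt_nonneg _)]
      rw [div_le_one (Real.sqrt_pos.mpr (by exact_mod_cast h))]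
      rw [show (1:ℝ) = Real.sqrt 1 by simp]
      exact Real.sqrt_le_sqrt (by exact_mod_cast h)
    have h2 : ‖∑ j ∈ range n, c j * stE j t‖ ≤ n := by
      refine (norm_sum_le _ _).trans ?_
      have h3 : ∀ j ∈ range n, ‖c j * stE j t‖ = (1:ℝ) := by
        intro j _
        rw [norm_mul, norm_stE, hc j, one_mul]
      rw [show (∑ j ∈ range n, ‖c j * stE j t‖) = ∑ _j ∈ range n, (1:ℝ) from
        Finset.sum_congr rfl h3]
      simp
    calc ‖(1 : ℂ) / ((Real.sqrt n : ℝ) : ℂ)‖ * ‖∑ j ∈ range n, c j * stE j t‖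
        ≤ 1 * n := by
          apply mul_le_mul h1 h2 (norm_nonneg _) zero_le_one
      _ = n := one_mul _

/-- For any sequence `c` of unimodular complex numbers, the
uniform unimodular polynomials `P_n(z) = (1/√n) ∑_{j=0}^{n-1} c_j z^j`
(evaluated at `z = e^{it}`) are not ultraflat:
`sup_{z ∈ S¹} ||P_n(z)| - 1|` does not tend to `0`. -/
theorem statement2
    (c : ℕ → ℂ) (hc : ∀ j : ℕ, ‖c j‖ = 1) :
    ¬ Tendsto
        (fun n : ℕ =>
          ⨆ t : ℝ,
            |‖
                ((1 / (Real.sqrt n : ℂ)) *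
                  ∑ j ∈ Finset.range n, c j * Complex.exp (Complex.I * (t : ℂ)) ^ j)‖ - 1|)
        atTop (nhds 0) := by
  intro htend
  have hrw : ∀ n : ℕ, ∀ t : ℝ,
      |‖((1 / (Real.sqrt n : ℂ)) *
          ∑ j ∈ Finset.range n, c j * Complex.exp (Complex.I * (t : ℂ)) ^ j)‖ - 1|
        = |‖stu c n t‖ - 1| := by
    intro n t
    have hsum : (∑ j ∈ Finset.range n, c j * Complex.exp (Complex.I * (t:ℂ)) ^ j)
        = ∑ j ∈ Finset.range n, c j * stE j t :=
      Finset.sum_congr rfl (fun j _ => by rw [stE_eq])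
    rw [stu, hsum]
  rw [Metric.tendsto_atTop] at htend
  obtain ⟨N₀, hN₀⟩ := htend (1/100) (by norm_num)
  set N := max N₀ 9 with hN
  have hN9 : 9 ≤ N := le_max_right _ _
  have hflat : ∀ n, N ≤ n → ∀ t : ℝ, |‖stu c n t‖ - 1| ≤ 1/100 := by
    intro n hn t
    have h := hN₀ n (le_trans (le_max_left _ _) hn)
    rw [Real.dist_eq, sub_zero] at h
    have hbdd : BddAbove (Set.range fun t : ℝ =>
        |‖((1 / (Real.sqrt n : ℂ)) *
          ∑ j ∈ Finset.range n, c j * Complex.exp (Complex.I * (t : ℂ)) ^ j)‖ - 1|) := by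
      refine ⟨(n : ℝ) + 1, ?_⟩
      rintro x ⟨s, rfl⟩
      dsimp only
      rw [hrw n s]
      have := stu_norm_le c hc n s
      have h0 := norm_nonneg (stu c n s)
      rw [abs_le]
      constructor <;> [linarith; linarith]
    have hle : |‖stu c n t‖ - 1|
        ≤ ⨆ s : ℝ, |‖((1 / (Real.sqrt n : ℂ)) *
            ∑ j ∈ Finset.range n, c j * Complex.exp (Complex.I * (s : ℂ)) ^ j)‖ - 1| := by
      rw [← hrw n t]
      exact le_ciSup hbdd t
    have hsup_le := le_abs_self (⨆ s : ℝ, |‖((1 / (Real.sqrt n : ℂ)) *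
        ∑ j ∈ Finset.range n, c j * Complex.exp (Complex.I * (s : ℂ)) ^ j)‖ - 1|)
    linarith
  have hVconst : ∀ m : ℕ, N ≤ m → stV c m = stV c N := by
    intro m hm
    induction m, hm using Nat.le_induction with
    | base => rfl
    | succ m hm ih =>
      rw [← ih]
      exact stV_step c hc (le_trans hN9 hm) (hflat m hm) (hflat (m+1) (by omega))
  have hest1 := stV_est c hc (show 1 ≤ N by omega) (hflat N le_rfl)
  have hest2 := stV_est c hc (show 1 ≤ 2*N by omega) (hflat (2*N) (by omega))
  have hVeq : stV c (2*N) = stV c N := hVconst (2*N) (by omega)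
  rw [hVeq] at hest2
  have hdiff : Real.pi * Complex.I * (((2*N : ℕ) : ℂ) - 1) - Real.pi * Complex.I * (((N:ℕ):ℂ) - 1)
      = Real.pi * Complex.I * ((N:ℕ):ℂ) := by push_cast; ring
  have hnorm : ‖Real.pi * Complex.I * ((N:ℕ):ℂ)‖ = π * N := by
    rw [norm_mul, norm_mul, Complex.norm_real, Complex.norm_I, Real.norm_eq_abs,
      _root_.abs_of_pos Real.pi_pos, mul_one]
    congr 1
    exact Complex.norm_natCast N
  have htri : π * N ≤ π * (2*N) / 25 + π * N / 25 := by
    have h1 : Real.pi * Complex.I * ((N:ℕ):ℂ)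
        = (Real.pi * Complex.I * (((2*N:ℕ):ℂ) - 1) - stV c N)
          + (stV c N - Real.pi * Complex.I * (((N:ℕ):ℂ) - 1)) := by
      rw [← hdiff]; ring
    calc π * N = ‖Real.pi * Complex.I * ((N:ℕ):ℂ)‖ := hnorm.symm
      _ ≤ ‖Real.pi * Complex.I * (((2*N:ℕ):ℂ) - 1) - stV c N‖
          + ‖stV c N - Real.pi * Complex.I * (((N:ℕ):ℂ) - 1)‖ := by
          rw [h1]; exact norm_add_le _ _
      _ ≤ π * (2*N) / 25 + π * N / 25 := by
          have h2 : ‖Real.pi * Complex.I * (((2*N:ℕ):ℂ) - 1) - stV c N‖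
              = ‖stV c N - Real.pi * Complex.I * (((2*N:ℕ):ℂ) - 1)‖ := norm_sub_rev _ _
          rw [h2]
          have h3 : π * ((2*N : ℕ) : ℝ) / 25 = π * (2*N) / 25 := by push_cast; ring
          have h4 : π * ((N : ℕ) : ℝ) / 25 = π * N / 25 := by push_cast; ring
          rw [← h3, ← h4]
          exact add_le_add hest2 hest1
  have hNpos : (0:ℝ) < N := by
    have : (9:ℝ) ≤ N := by exact_mod_cast hN9
    linarith
  nlinarith [Real.pi_pos, hNpos]
end

section
/- (Newman's L⁴ lemma for Gauss sums.) There exists a constant C > 0 such that for every n ≥ 1, | ∫_{S¹} |∑_{j=0}^{n−1} e^{iπj²/n} z^j|⁴ dz − n² | ≤ C n^{3/2}; equivalently, ‖∑_{j=0}^{n−1} e^{iπj²/n} z^j‖₄⁴ = n² + O(n^{3/2}). -/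
open Filter MeasureTheory Finset

noncomputable section NewmanAux

def aa (n j : ℕ) : ℂ := Complex.exp (Complex.I * (Real.pi : ℂ) * (j : ℂ) ^ 2 / (n : ℂ))
def PP (n : ℕ) : Finset (ℕ × ℕ) := Finset.range n ×ˢ Finset.range n
def dd (p : ℕ × ℕ) : ℤ := (p.1 : ℤ) - (p.2 : ℤ)
def ff (n : ℕ) (p : ℕ × ℕ) : ℂ := aa n p.1 * (starRingEnd ℂ) (aa n p.2)
def gam (n : ℕ) (h : ℤ) : ℂ := ∑ p ∈ (PP n).filter (fun p => dd p = h), ff n p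

lemma conj_exp_I_mul (t : ℝ) (z : ℂ) (hz : (starRingEnd ℂ) z = z) :
    (starRingEnd ℂ) (Complex.exp (Complex.I * t * z)) = Complex.exp (-(Complex.I * t * z)) := by
  rw [← Complex.exp_conj]
  congr 1
  rw [map_mul, map_mul, Complex.conj_I, Complex.conj_ofReal, hz]
  ring

lemma step1 (n : ℕ) (t : ℝ) :
    (∑ j ∈ Finset.range n, aa n j * Complex.exp (Complex.I * t) ^ j) *
      (starRingEnd ℂ) (∑ j ∈ Finset.range n, aa n j * Complex.exp (Complex.I * t) ^ j) =
    ∑ p ∈ PP n, ff n p * Complex.exp (Complex.I * t * ((dd p : ℤ) : ℂ)) := by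
  rw [map_sum, Finset.sum_mul_sum]
  rw [PP, Finset.sum_product]
  refine Finset.sum_congr rfl fun j hj => Finset.sum_congr rfl fun k hk => ?_
  have hc : (starRingEnd ℂ) (Complex.exp (Complex.I * ↑t)) = Complex.exp (-(Complex.I * ↑t)) := by
    have := conj_exp_I_mul t 1 (by simp)
    simpa using this
  rw [map_mul, map_pow, hc]
  rw [← Complex.exp_nat_mul, ← Complex.exp_nat_mul, ff, dd]
  have : Complex.exp (↑j * (Complex.I * ↑t)) * Complex.exp (↑k * -(Complex.I * ↑t)) =
      Complex.exp (Complex.I * ↑t * (((j:ℤ) - (k:ℤ) : ℤ) : ℂ)) := by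
    rw [← Complex.exp_add]; congr 1; push_cast; ring
  rw [← this]; ring

lemma step2 (n : ℕ) (t : ℝ) :
    (∑ p ∈ PP n, ff n p * Complex.exp (Complex.I * t * ((dd p : ℤ) : ℂ))) *
      (starRingEnd ℂ) (∑ p ∈ PP n, ff n p * Complex.exp (Complex.I * t * ((dd p : ℤ) : ℂ))) =
    ∑ r ∈ PP n ×ˢ PP n, ff n r.1 * (starRingEnd ℂ) (ff n r.2) *
        Complex.exp (Complex.I * t * ((dd r.1 - dd r.2 : ℤ) : ℂ)) := by
  rw [map_sum, Finset.sum_mul_sum, Finset.sum_product]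
  refine Finset.sum_congr rfl fun p hp => Finset.sum_congr rfl fun q hq => ?_
  rw [map_mul, conj_exp_I_mul t _ (by simp)]
  have : Complex.exp (Complex.I * ↑t * ((dd p : ℤ) : ℂ)) *
      Complex.exp (-(Complex.I * ↑t * ((dd q : ℤ) : ℂ))) =
      Complex.exp (Complex.I * ↑t * ((dd p - dd q : ℤ) : ℂ)) := by
    rw [← Complex.exp_add]; congr 1; push_cast; ring
  rw [← this]; ring

lemma L2 (n : ℕ) (t : ℝ) :
    ‖∑ j ∈ Finset.range n, aa n j * Complex.exp (Complex.I * t) ^ j‖ ^ 4 =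
    (∑ r ∈ PP n ×ˢ PP n,
        ff n r.1 * (starRingEnd ℂ) (ff n r.2) *
          Complex.exp (Complex.I * t * ((dd r.1 - dd r.2 : ℤ) : ℂ))).re := by
  have h2 : ∀ z : ℂ, ‖z‖ ^ 4 = ((z * (starRingEnd ℂ) z) *
      (starRingEnd ℂ) (z * (starRingEnd ℂ) z)).re := by
    intro z
    rw [Complex.mul_conj, Complex.ofReal_re, Complex.normSq_mul, Complex.normSq_conj,
      ← Complex.sq_norm]
    ring
  rw [h2, step1 n t, step2 n t]
lemma L1 (m : ℤ) : ∫ t in (0:ℝ)..(2 * Real.pi), Complex.exp (Complex.I * t * m) =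
    if m = 0 then ((2 * Real.pi : ℝ) : ℂ) else 0 := by
  rcases eq_or_ne m 0 with hm | hm
  · simp [hm]
  · rw [if_neg hm]
    have h1 : ∀ t : ℝ, Complex.I * t * m = (Complex.I * m) * t := by intro t; ring
    simp_rw [h1]
    have hc : (Complex.I * m) ≠ 0 :=
      mul_ne_zero Complex.I_ne_zero (Int.cast_ne_zero.2 hm)
    rw [integral_exp_mul_complex hc]
    have h2 : Complex.I * m * ((2 * Real.pi : ℝ) : ℂ) = m * (2 * Real.pi * Complex.I) := by
      push_cast; ring
    rw [h2, Complex.exp_int_mul_two_pi_mul_I]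
    simp

lemma intervalIntegral_re {f : ℝ → ℂ} {a b : ℝ}
    (hf : IntervalIntegrable f MeasureTheory.volume a b) :
    (∫ t in a..b, (f t).re) = (∫ t in a..b, f t).re := by
  simp only [intervalIntegral]
  have h1 := integral_re hf.1
  have h2 := integral_re hf.2
  simp only [RCLike.re_to_complex] at h1 h2
  rw [h1, h2]
  simp [Complex.sub_re]

lemma stepA (n : ℕ) (hn : 1 ≤ n) :
    (1 / (2 * Real.pi)) * (∫ t in (0:ℝ)..(2 * Real.pi),
        ‖∑ j ∈ Finset.range n, aa n j * Complex.exp (Complex.I * t) ^ j‖ ^ 4) =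
    ∑ h ∈ Finset.Icc (1 - (n:ℤ)) ((n:ℤ) - 1), Complex.normSq (gam n h) := by
  simp_rw [L2 n]
  set Q := PP n ×ˢ PP n with hQ
  set g : (ℕ × ℕ) × (ℕ × ℕ) → ℝ → ℂ := fun r t =>
    ff n r.1 * (starRingEnd ℂ) (ff n r.2) *
      Complex.exp (Complex.I * t * ((dd r.1 - dd r.2 : ℤ) : ℂ)) with hg
  have hcont : ∀ r, Continuous (g r) := by
    intro r
    apply Continuous.mul continuous_const
    apply Complex.continuous_exp.comp
    fun_prop
  have hsum_cont : Continuous (fun t => ∑ r ∈ Q, g r t) :=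
    continuous_finset_sum _ fun r _ => hcont r
  rw [intervalIntegral_re (hsum_cont.intervalIntegrable 0 (2 * Real.pi))]
  rw [intervalIntegral.integral_finset_sum fun r _ => (hcont r).intervalIntegrable _ _]
  have hval : ∀ r ∈ Q, (∫ t in (0:ℝ)..(2 * Real.pi), g r t) =
      if dd r.2 = dd r.1 then ff n r.1 * (starRingEnd ℂ) (ff n r.2) * ((2 * Real.pi : ℝ) : ℂ)
      else 0 := by
    intro r _
    rw [hg]
    simp only
    rw [intervalIntegral.integral_const_mul, L1]
    rcases eq_or_ne (dd r.2) (dd r.1) with h | h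
    · rw [if_pos h, if_pos (by omega)]
    · rw [if_neg (by omega), if_neg h, mul_zero]
  rw [Finset.sum_congr rfl hval]
  rw [← Complex.re_ofReal_mul, Finset.mul_sum]
  have hval2 : ∀ r ∈ Q, ((1 / (2 * Real.pi) : ℝ) : ℂ) *
      (if dd r.2 = dd r.1 then ff n r.1 * (starRingEnd ℂ) (ff n r.2) * ((2 * Real.pi : ℝ) : ℂ)
        else 0) =
      if dd r.2 = dd r.1 then ff n r.1 * (starRingEnd ℂ) (ff n r.2) else 0 := by
    intro r _
    split
    · push_cast
      have : (Real.pi : ℂ) ≠ 0 := Complex.ofReal_ne_zero.2 Real.pi_ne_zero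
      field_simp
    · simp
  rw [Finset.sum_congr rfl hval2, hQ, Finset.sum_product]
  have hinner : ∀ p ∈ PP n,
      (∑ q ∈ PP n, if dd q = dd p then ff n p * (starRingEnd ℂ) (ff n q) else 0) =
      ff n p * (starRingEnd ℂ) (gam n (dd p)) := by
    intro p _
    rw [gam, map_sum, Finset.mul_sum, ← Finset.sum_filter]
  rw [Finset.sum_congr rfl hinner]
  have hmap : ∀ p ∈ PP n, dd p ∈ (PP n).image dd := fun p hp => Finset.mem_image_of_mem _ hp
  rw [← Finset.sum_fiberwise_of_maps_to hmap]
  have hfiber : ∀ h ∈ (PP n).image dd,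
      (∑ p ∈ (PP n).filter (fun p => dd p = h), ff n p * (starRingEnd ℂ) (gam n (dd p))) =
      ((Complex.normSq (gam n h) : ℝ) : ℂ) := by
    intro h _
    have : ∀ p ∈ (PP n).filter (fun p => dd p = h),
        ff n p * (starRingEnd ℂ) (gam n (dd p)) = ff n p * (starRingEnd ℂ) (gam n h) := by
      intro p hp
      rw [(Finset.mem_filter.1 hp).2]
    rw [Finset.sum_congr rfl this, ← Finset.sum_mul, ← gam, Complex.mul_conj]
  rw [Finset.sum_congr rfl hfiber]
  have hsub : (PP n).image dd ⊆ Finset.Icc (1 - (n:ℤ)) ((n:ℤ) - 1) := by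
    intro h hh
    obtain ⟨p, hp, hdp⟩ := Finset.mem_image.1 hh
    rw [PP, Finset.mem_product, Finset.mem_range, Finset.mem_range] at hp
    rw [Finset.mem_Icc, ← hdp, dd]
    omega
  rw [Finset.sum_subset hsub]
  · rw [← Complex.ofReal_sum, Complex.ofReal_re]
  · intro h _ hh
    have : gam n h = 0 := by
      rw [gam, Finset.filter_false_of_mem, Finset.sum_empty]
      intro p hp hdp
      exact hh (Finset.mem_image.2 ⟨p, hp, hdp⟩)
    rw [this]
    simp


lemma aa_eq (n j : ℕ) : aa n j = Complex.exp ((Real.pi * j ^ 2 / n : ℝ) * Complex.I) := by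
  unfold aa; push_cast; ring_nf

lemma conj_exp_ofReal_mul_I (x : ℝ) :
    (starRingEnd ℂ) (Complex.exp ((x : ℝ) * Complex.I)) =
      Complex.exp (((-x : ℝ)) * Complex.I) := by
  rw [← Complex.exp_conj, map_mul, Complex.conj_I, Complex.conj_ofReal]
  push_cast; ring_nf

lemma exp_ofReal_mul_I_mul (x y : ℝ) :
    Complex.exp ((x : ℝ) * Complex.I) * Complex.exp ((y : ℝ) * Complex.I) =
      Complex.exp (((x + y : ℝ)) * Complex.I) := by
  rw [← Complex.exp_add]; push_cast; ring_nf

lemma exp_ofReal_mul_I_pow (x : ℝ) (k : ℕ) :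
    Complex.exp ((x : ℝ) * Complex.I) ^ k = Complex.exp (((k * x : ℝ)) * Complex.I) := by
  rw [← Complex.exp_nat_mul]; push_cast; ring_nf

lemma normSq_exp_ofReal_mul_I (x : ℝ) :
    Complex.normSq (Complex.exp ((x : ℝ) * Complex.I)) = 1 := by
  rw [Complex.normSq_eq_norm_sq, Complex.norm_exp_ofReal_mul_I]; norm_num

lemma L9 (x : ℝ) :
    Complex.normSq (Complex.exp ((x : ℝ) * Complex.I) - 1) = 2 - 2 * Real.cos x := by
  rw [Complex.exp_mul_I]
  simp [Complex.normSq_apply, Complex.cos_ofReal_re, Complex.sin_ofReal_re,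
    Complex.cos_ofReal_im, Complex.sin_ofReal_im]
  nlinarith [Real.sin_sq_add_cos_sq x]

lemma gam_nat (n h : ℕ) : gam n (h : ℤ) =
    ∑ k ∈ Finset.range (n - h), aa n (k + h) * (starRingEnd ℂ) (aa n k) := by
  rw [gam]
  refine Finset.sum_nbij' (fun p => p.2) (fun k => (k + h, k)) ?_ ?_ ?_ ?_ ?_
  · intro p hp
    simp only [Finset.mem_filter] at hp ⊢
    simp only [PP, dd, Finset.mem_filter, Finset.mem_product, Finset.mem_range] at hp ⊢
    omega
  · intro k hk
    simp only [Finset.mem_filter] at hk ⊢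
    simp only [PP, dd, Finset.mem_filter, Finset.mem_product, Finset.mem_range] at hk ⊢
    omega
  · intro p hp
    simp only [Finset.mem_filter] at hp
    simp only [PP, dd, Finset.mem_filter, Finset.mem_product, Finset.mem_range] at hp
    have h1 : p.1 = p.2 + h := by omega
    ext
    · exact h1.symm
    · rfl
  · intro k hk; rfl
  · intro p hp
    simp only [Finset.mem_filter] at hp
    simp only [PP, dd, Finset.mem_filter, Finset.mem_product, Finset.mem_range] at hp
    have h1 : p.1 = p.2 + h := by omega
    rw [ff, h1]

lemma gam_zero (n : ℕ) : gam n (0 : ℤ) = (n : ℂ) := by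
  have := gam_nat n 0
  simp only [Nat.cast_zero, Nat.sub_zero, add_zero] at this
  rw [this]
  have : ∀ k ∈ Finset.range n, aa n k * (starRingEnd ℂ) (aa n k) = 1 := by
    intro k _
    rw [Complex.mul_conj, aa_eq, normSq_exp_ofReal_mul_I, Complex.ofReal_one]
  rw [Finset.sum_congr rfl this, Finset.sum_const, Finset.card_range]
  simp

lemma gam_neg (n : ℕ) (h : ℤ) : gam n (-h) = (starRingEnd ℂ) (gam n h) := by
  rw [gam, gam, map_sum]
  refine Finset.sum_nbij' (fun p => (p.2, p.1)) (fun p => (p.2, p.1)) ?_ ?_ ?_ ?_ ?_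
  · intro p hp
    simp only [Finset.mem_filter] at hp ⊢
    simp only [PP, dd, Finset.mem_filter, Finset.mem_product, Finset.mem_range] at hp ⊢
    omega
  · intro p hp
    simp only [Finset.mem_filter] at hp ⊢
    simp only [PP, dd, Finset.mem_filter, Finset.mem_product, Finset.mem_range] at hp ⊢
    omega
  · intro p _; rfl
  · intro p _; rfl
  · intro p _
    rw [ff, ff, map_mul, Complex.conj_conj]
    ring
lemma gam_formula (n h : ℕ) (hn : 1 ≤ n) :
    gam n (h : ℤ) = Complex.exp ((Real.pi * h ^ 2 / n : ℝ) * Complex.I) *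
      ∑ k ∈ Finset.range (n - h),
        Complex.exp ((2 * Real.pi * h / n : ℝ) * Complex.I) ^ k := by
  rw [gam_nat, Finset.mul_sum]
  refine Finset.sum_congr rfl fun k hk => ?_
  rw [aa_eq, aa_eq, conj_exp_ofReal_mul_I, exp_ofReal_mul_I_mul,
    exp_ofReal_mul_I_pow, exp_ofReal_mul_I_mul]
  congr 1
  have hn0 : (n:ℝ) ≠ 0 := Nat.cast_ne_zero.2 (by omega)
  push_cast
  field_simp
  ring
def psi (n m : ℕ) : ℝ := min ((n:ℝ)^2 / (4 * (m:ℝ)^2)) (Real.pi^2 * (m:ℝ)^2 / 4)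

lemma psi_nonneg (n m : ℕ) : 0 ≤ psi n m := by
  unfold psi
  positivity

set_option maxHeartbeats 1000000 in
lemma normSq_gam_le (n h : ℕ) (hn : 1 ≤ n) (hh1 : 1 ≤ h) (hh2 : h < n) :
    Complex.normSq (gam n (h : ℤ)) ≤ psi n (min h (n - h)) := by
  set m := min h (n - h) with hmdef
  have hm1 : 1 ≤ m := by omega
  have hm2 : 2 * m ≤ n := by omega
  have hmle : m ≤ h ∧ m = h ∨ m ≤ n - h ∧ m = n - h := by omega
  clear_value m
  have hn0 : (0:ℝ) < n := by exact_mod_cast Nat.pos_of_ne_zero (by omega)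
  have hm0 : (0:ℝ) < m := by exact_mod_cast Nat.pos_of_ne_zero (by omega)
  have hpi := Real.pi_pos
  set q : ℂ := Complex.exp ((2 * Real.pi * h / n : ℝ) * Complex.I) with hqdef
  have hq1 : q ≠ 1 := by
    intro hq1
    rw [Complex.exp_eq_one_iff] at hq1
    obtain ⟨k, hk⟩ := hq1
    have him := congrArg Complex.im hk
    simp [Complex.mul_im, Complex.ofReal_re, Complex.ofReal_im] at him
    have hreal : (h : ℝ) = (n : ℝ) * k := by
      field_simp at him
      nlinarith [him]
    have hint : (h : ℤ) = (n : ℤ) * k := by exact_mod_cast hreal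
    have hk1 : 1 ≤ k := by nlinarith [hint]
    nlinarith [hint]
  have hgeo : ∑ k ∈ Finset.range (n - h), q ^ k = (q ^ (n - h) - 1) / (q - 1) :=
    geom_sum_eq hq1 _
  have hnormSq : Complex.normSq (gam n (h : ℤ)) =
      Complex.normSq (q ^ (n - h) - 1) / Complex.normSq (q - 1) := by
    rw [gam_formula n h hn, Complex.normSq_mul, normSq_exp_ofReal_mul_I, one_mul, ← hqdef,
      hgeo, Complex.normSq_div]
  obtain ⟨c, hc⟩ : ∃ c : ℕ, h * (n - h) + m * m = n * c := by
    rcases le_total h (n - h) with hle | hle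
    · have hmh : m = h := by omega
      refine ⟨h, ?_⟩
      rw [hmh]
      zify [hh2.le]
      ring
    · have hmh : m = n - h := by omega
      refine ⟨n - h, ?_⟩
      rw [hmh]
      zify [hh2.le]
      ring
  have hcast : ((n - h : ℕ) : ℝ) = (n : ℝ) - h := by
    push_cast [Nat.cast_sub hh2.le]
    ring
  have hcR : (h:ℝ) * ((n:ℝ) - h) + (m:ℝ) * m = (n:ℝ) * c := by
    have h2 := congrArg (fun x : ℕ => (x : ℝ)) hc
    push_cast [Nat.cast_sub hh2.le] at h2
    linarith
  have hang : ((n - h : ℕ) : ℝ) * (2 * Real.pi * h / n) =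
      (c : ℝ) * (2 * Real.pi) - 2 * Real.pi * (m:ℝ)^2 / n := by
    rw [hcast]
    field_simp
    nlinarith [hcR]
  have hN : Complex.normSq (q ^ (n - h) - 1) =
      2 - 2 * Real.cos (2 * Real.pi * (m:ℝ)^2 / n) := by
    rw [hqdef, exp_ofReal_mul_I_pow, hang, L9, Real.cos_nat_mul_two_pi_sub]
  have hD : Complex.normSq (q - 1) = 2 - 2 * Real.cos (2 * Real.pi * (m:ℝ) / n) := by
    rw [hqdef, L9]
    congr 1
    rcases le_total h (n - h) with hle | hle
    · have hmh : m = h := by omega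
      rw [hmh]
    · have hmh : m = n - h := by omega
      have hhr : (h : ℝ) = (n : ℝ) - m := by
        rw [hmh, hcast]
        ring
      rw [hhr]
      have : 2 * Real.pi * ((n:ℝ) - m) / n = 2 * Real.pi - 2 * Real.pi * m / n := by
        field_simp
      rw [this, Real.cos_two_pi_sub]
  have hxle : 2 * Real.pi * (m:ℝ) / n ≤ Real.pi := by
    rw [div_le_iff₀ hn0]
    have : 2 * (m:ℝ) ≤ n := by exact_mod_cast hm2
    nlinarith
  have hcosD := Real.cos_le_one_sub_mul_cos_sq
    (x := 2 * Real.pi * (m:ℝ) / n) (by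
      rw [abs_of_nonneg (by positivity)]
      exact hxle)
  have hDlb : 16 * (m:ℝ)^2 / (n:ℝ)^2 ≤ Complex.normSq (q - 1) := by
    rw [hD]
    have hsq : 2 / Real.pi ^ 2 * (2 * Real.pi * (m:ℝ) / n) ^ 2 = 8 * (m:ℝ)^2 / (n:ℝ)^2 := by
      field_simp
      ring
    rw [hsq] at hcosD
    have h8 : 8 * (m:ℝ)^2/(n:ℝ)^2 ≤ 1 - Real.cos (2 * Real.pi * (m:ℝ) / n) := by
      linarith [hcosD]
    calc 16 * (m:ℝ)^2/(n:ℝ)^2 = 2 * (8 * (m:ℝ)^2/(n:ℝ)^2) := by ring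
      _ ≤ 2 * (1 - Real.cos (2 * Real.pi * (m:ℝ) / n)) :=
          mul_le_mul_of_nonneg_left h8 (by norm_num)
      _ = 2 - 2 * Real.cos (2 * Real.pi * (m:ℝ) / n) := by ring
  have hDpos : 0 < Complex.normSq (q - 1) := lt_of_lt_of_le (by positivity) hDlb
  have hNub4 : Complex.normSq (q ^ (n - h) - 1) ≤ 4 := by
    rw [hN]
    linarith [Real.neg_one_le_cos (2 * Real.pi * (m:ℝ)^2 / n)]
  have hNub2 : Complex.normSq (q ^ (n - h) - 1) ≤ (2 * Real.pi * (m:ℝ)^2 / n)^2 := by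
    rw [hN]
    linarith [Real.one_sub_sq_div_two_le_cos (x := 2 * Real.pi * (m:ℝ)^2 / n)]
  rw [hnormSq, psi]
  apply le_min
  · calc Complex.normSq (q ^ (n - h) - 1) / Complex.normSq (q - 1)
        ≤ 4 / (16 * (m:ℝ)^2 / (n:ℝ)^2) := by
          apply div_le_div₀ (by norm_num) hNub4 (by positivity) hDlb
    _ = (n:ℝ)^2 / (4 * (m:ℝ)^2) := by
          field_simp
          ring
  · calc Complex.normSq (q ^ (n - h) - 1) / Complex.normSq (q - 1)
        ≤ (2 * Real.pi * (m:ℝ)^2 / n)^2 / (16 * (m:ℝ)^2 / (n:ℝ)^2) := by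
          apply div_le_div₀ (by positivity) hNub2 (by positivity) hDlb
    _ = Real.pi^2 * (m:ℝ)^2 / 4 := by
          field_simp
          ring


lemma sqrt_cast_le (n : ℕ) : ((Nat.sqrt n : ℝ)) ≤ Real.sqrt n := by
  rw [show ((Nat.sqrt n : ℝ)) = Real.sqrt ((Nat.sqrt n)^2) from (Real.sqrt_sq (by positivity)).symm]
  apply Real.sqrt_le_sqrt
  exact_mod_cast Nat.sqrt_le' n

lemma sqrt_le_two_nat_sqrt (n : ℕ) (hn : 1 ≤ n) : Real.sqrt n ≤ 2 * Nat.sqrt n := by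
  have h1 : 1 ≤ Nat.sqrt n := by
    rw [Nat.le_sqrt]; omega
  have h2 : n ≤ (2 * Nat.sqrt n)^2 := by
    have := Nat.lt_succ_sqrt' n
    nlinarith
  have key : Real.sqrt n ≤ Real.sqrt (((2 * Nat.sqrt n)^2 : ℕ)) := by
    apply Real.sqrt_le_sqrt; exact_mod_cast h2
  have e : Real.sqrt (((2 * Nat.sqrt n)^2 : ℕ)) = 2 * (Nat.sqrt n : ℝ) := by
    rw [show (((2 * Nat.sqrt n)^2 : ℕ) : ℝ) = (2 * (Nat.sqrt n:ℝ))^2 by push_cast; ring]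
    exact Real.sqrt_sq (by positivity)
  rw [e] at key
  exact key

lemma psi_sum (n : ℕ) (hn : 1 ≤ n) :
    ∑ h ∈ Finset.Ico 1 n, psi n h ≤
      (Real.pi^2 / 4 + 1 / 2) * (Real.sqrt n * n) := by
  classical
  set M := Nat.sqrt n with hM
  have hM1 : 1 ≤ M := by rw [hM, Nat.le_sqrt]; omega
  have hn0 : (0:ℝ) < n := by exact_mod_cast Nat.pos_of_ne_zero (by omega)
  have hs : Finset.Ico 1 n =
      (Finset.Ico 1 n).filter (fun h => h ^ 2 ≤ n) ∪
      (Finset.Ico 1 n).filter (fun h => ¬ h ^ 2 ≤ n) := (Finset.filter_union_filter_not_eq _ _).symm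
  have hdisj : Disjoint ((Finset.Ico 1 n).filter (fun h => h ^ 2 ≤ n))
      ((Finset.Ico 1 n).filter (fun h => ¬ h ^ 2 ≤ n)) := Finset.disjoint_filter_filter_not _ _ _
  rw [hs, Finset.sum_union hdisj]
  have hA : ∑ h ∈ (Finset.Ico 1 n).filter (fun h => h ^ 2 ≤ n), psi n h ≤
      Real.pi^2 / 4 * (Real.sqrt n * n) := by
    have hterm : ∀ h ∈ (Finset.Ico 1 n).filter (fun h => h ^ 2 ≤ n),
        psi n h ≤ Real.pi^2 * n / 4 := by
      intro h hh
      rw [Finset.mem_filter] at hh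
      refine (min_le_right _ _).trans ?_
      have : ((h:ℝ))^2 ≤ n := by exact_mod_cast hh.2
      nlinarith [Real.pi_pos]
    calc ∑ h ∈ (Finset.Ico 1 n).filter (fun h => h ^ 2 ≤ n), psi n h
        ≤ ((Finset.Ico 1 n).filter (fun h => h ^ 2 ≤ n)).card * (Real.pi^2 * n / 4) :=
          by simpa using Finset.sum_le_card_nsmul _ _ _ hterm
      _ ≤ (M : ℝ) * (Real.pi^2 * n / 4) := by
          apply mul_le_mul_of_nonneg_right _ (by positivity)
          have hsub : (Finset.Ico 1 n).filter (fun h => h ^ 2 ≤ n) ⊆ Finset.Icc 1 M := by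
            intro h hh
            rw [Finset.mem_filter, Finset.mem_Ico] at hh
            rw [Finset.mem_Icc]
            exact ⟨hh.1.1, by rw [hM, Nat.le_sqrt']; exact hh.2⟩
          have := Finset.card_le_card hsub
          rw [Nat.card_Icc] at this
          exact_mod_cast this.trans (by omega)
      _ ≤ Real.sqrt n * (Real.pi^2 * n / 4) :=
          mul_le_mul_of_nonneg_right (sqrt_cast_le n) (by positivity)
      _ = Real.pi^2 / 4 * (Real.sqrt n * n) := by ring
  have hB : ∑ h ∈ (Finset.Ico 1 n).filter (fun h => ¬ h ^ 2 ≤ n), psi n h ≤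
      1 / 2 * (Real.sqrt n * n) := by
    have hterm : ∀ h ∈ (Finset.Ico 1 n).filter (fun h => ¬ h ^ 2 ≤ n),
        psi n h ≤ (n:ℝ)^2 / 4 * (1 / ((h:ℝ) - 1) - 1 / h) := by
      intro h hh
      rw [Finset.mem_filter, Finset.mem_Ico, not_le] at hh
      have hh2 : 2 ≤ h := by nlinarith [hh.1.1, hh.2]
      have hhr : (2:ℝ) ≤ (h:ℝ) := by exact_mod_cast hh2
      refine (min_le_left _ _).trans ?_
      have key : 1 / ((h:ℝ))^2 ≤ 1 / ((h:ℝ) - 1) - 1 / h := by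
        rw [div_sub_div _ _ (by linarith) (by linarith)]
        apply div_le_div₀ (by linarith) (by linarith) (by nlinarith) (by nlinarith)
      calc (n:ℝ)^2 / (4 * (h:ℝ)^2) = (n:ℝ)^2 / 4 * (1 / ((h:ℝ))^2) := by ring
        _ ≤ (n:ℝ)^2 / 4 * (1 / ((h:ℝ) - 1) - 1 / h) :=
            mul_le_mul_of_nonneg_left key (by positivity)
    calc ∑ h ∈ (Finset.Ico 1 n).filter (fun h => ¬ h ^ 2 ≤ n), psi n h
        ≤ ∑ h ∈ (Finset.Ico 1 n).filter (fun h => ¬ h ^ 2 ≤ n),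
            (n:ℝ)^2 / 4 * (1 / ((h:ℝ) - 1) - 1 / h) := Finset.sum_le_sum hterm
      _ ≤ ∑ h ∈ Finset.Ico (M + 1) n, (n:ℝ)^2 / 4 * (1 / ((h:ℝ) - 1) - 1 / h) := by
          apply Finset.sum_le_sum_of_subset_of_nonneg
          · intro h hh
            rw [Finset.mem_filter, Finset.mem_Ico, not_le] at hh
            rw [Finset.mem_Ico]
            refine ⟨?_, hh.1.2⟩
            by_contra hcon
            push_neg at hcon
            have : h ≤ M := by omega
            rw [hM, Nat.le_sqrt'] at this
            omega
          · intro h hh _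
            rw [Finset.mem_Ico] at hh
            have h2 : 2 ≤ h := by omega
            have hhr : (2:ℝ) ≤ (h:ℝ) := by exact_mod_cast h2
            have : 1 / (h:ℝ) ≤ 1 / ((h:ℝ) - 1) :=
              one_div_le_one_div_of_le (by linarith) (by linarith)
            have h4 : (0:ℝ) ≤ (n:ℝ)^2/4 := by positivity
            nlinarith
      _ = (n:ℝ)^2 / 4 * ∑ h ∈ Finset.Ico (M + 1) n, (1 / ((h:ℝ) - 1) - 1 / h) := by
          rw [Finset.mul_sum]
      _ ≤ (n:ℝ)^2 / 4 * (1 / M) := by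
          apply mul_le_mul_of_nonneg_left _ (by positivity)
          rw [Finset.sum_Ico_eq_sum_range]
          have : ∀ i ∈ Finset.range (n - (M + 1)),
              (1 / (((M + 1 + i : ℕ):ℝ) - 1) - 1 / ((M + 1 + i : ℕ):ℝ)) =
              (fun j => 1 / ((M + j : ℕ):ℝ)) i - (fun j => 1 / ((M + j : ℕ):ℝ)) (i + 1) := by
            intro i _
            simp only
            congr 2
            · push_cast; ring
            · push_cast; ring
          rw [Finset.sum_congr rfl this, Finset.sum_range_sub']
          simp only [Nat.add_zero]
          have : 0 ≤ 1 / ((M + (n - (M+1)) : ℕ):ℝ) := by positivity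
          linarith
      _ ≤ (n:ℝ)^2 / 4 * (2 / Real.sqrt n) := by
          apply mul_le_mul_of_nonneg_left _ (by positivity)
          rw [div_le_div_iff₀ (by exact_mod_cast Nat.pos_of_ne_zero (by omega)) (Real.sqrt_pos.2 hn0)]
          have := sqrt_le_two_nat_sqrt n hn
          push_cast at this ⊢
          linarith
      _ = 1 / 2 * (Real.sqrt n * n) := by
          have hsq : Real.sqrt n * Real.sqrt n = n := Real.mul_self_sqrt (by positivity)
          have hsp : (0:ℝ) < Real.sqrt n := Real.sqrt_pos.2 hn0
          field_simp
          nlinarith [hsq]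
  linarith
lemma stepB (n : ℕ) (hn : 1 ≤ n) :
    (n:ℝ)^2 ≤ (∑ h ∈ Finset.Icc (1 - (n:ℤ)) ((n:ℤ) - 1), Complex.normSq (gam n h)) ∧
    (∑ h ∈ Finset.Icc (1 - (n:ℤ)) ((n:ℤ) - 1), Complex.normSq (gam n h)) ≤
      (n:ℝ)^2 + (Real.pi^2 + 2) * (Real.sqrt n * n) := by
  classical
  have h0mem : (0:ℤ) ∈ Finset.Icc (1 - (n:ℤ)) ((n:ℤ) - 1) := by
    rw [Finset.mem_Icc]; omega
  have hsplit : ∑ h ∈ Finset.Icc (1 - (n:ℤ)) ((n:ℤ) - 1), Complex.normSq (gam n h) =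
      Complex.normSq (gam n 0) +
      ∑ h ∈ (Finset.Icc (1 - (n:ℤ)) ((n:ℤ) - 1)).erase 0, Complex.normSq (gam n h) :=
    (Finset.add_sum_erase _ _ h0mem).symm
  have herase : (Finset.Icc (1 - (n:ℤ)) ((n:ℤ) - 1)).erase 0 =
      Finset.Icc (1 - (n:ℤ)) (-1) ∪ Finset.Icc (1:ℤ) ((n:ℤ) - 1) := by
    ext x
    simp only [Finset.mem_erase, Finset.mem_Icc, Finset.mem_union]
    omega
  have hdisj : Disjoint (Finset.Icc (1 - (n:ℤ)) (-1)) (Finset.Icc (1:ℤ) ((n:ℤ) - 1)) := by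
    rw [Finset.disjoint_left]
    intro x hx hy
    rw [Finset.mem_Icc] at hx hy
    omega
  have hneg : ∑ h ∈ Finset.Icc (1 - (n:ℤ)) (-1), Complex.normSq (gam n h) =
      ∑ h ∈ Finset.Icc (1:ℤ) ((n:ℤ) - 1), Complex.normSq (gam n h) := by
    refine Finset.sum_nbij' (fun h => -h) (fun h => -h) ?_ ?_ ?_ ?_ ?_
    · intro x hx; rw [Finset.mem_Icc] at hx ⊢; omega
    · intro x hx; rw [Finset.mem_Icc] at hx ⊢; omega
    · intro x _; ring
    · intro x _; ring
    · intro x _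
      have : gam n x = (starRingEnd ℂ) (gam n (-x)) := by
        rw [← gam_neg n (-x), neg_neg]
      rw [this, Complex.normSq_conj]
  have hnat : ∑ h ∈ Finset.Icc (1:ℤ) ((n:ℤ) - 1), Complex.normSq (gam n h) =
      ∑ h ∈ Finset.Ico 1 n, Complex.normSq (gam n (h:ℤ)) := by
    refine Finset.sum_nbij' (fun h => h.toNat) (fun h => (h:ℤ)) ?_ ?_ ?_ ?_ ?_
    · intro x hx; rw [Finset.mem_Icc] at hx; rw [Finset.mem_Ico]; omega
    · intro x hx; rw [Finset.mem_Ico] at hx; rw [Finset.mem_Icc]; omega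
    · intro x hx; rw [Finset.mem_Icc] at hx; omega
    · intro x hx; rw [Finset.mem_Ico] at hx; omega
    · intro x hx
      rw [Finset.mem_Icc] at hx
      have hx' : ((x.toNat : ℕ) : ℤ) = x := by omega
      rw [hx']
  have hnormSq0 : Complex.normSq (gam n 0) = (n:ℝ)^2 := by
    rw [gam_zero n]
    simp [Complex.normSq_apply]
    ring
  have hS : ∑ h ∈ Finset.Icc (1 - (n:ℤ)) ((n:ℤ) - 1), Complex.normSq (gam n h) =
      (n:ℝ)^2 + 2 * ∑ h ∈ Finset.Ico 1 n, Complex.normSq (gam n (h:ℤ)) := by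
    rw [hsplit, herase, Finset.sum_union hdisj, hneg, hnat, hnormSq0]
    ring
  have hnonneg : 0 ≤ ∑ h ∈ Finset.Ico 1 n, Complex.normSq (gam n (h:ℤ)) :=
    Finset.sum_nonneg fun h _ => Complex.normSq_nonneg _
  constructor
  · rw [hS]; linarith
  · rw [hS]
    have hle : ∑ h ∈ Finset.Ico 1 n, Complex.normSq (gam n (h:ℤ)) ≤
        ∑ h ∈ Finset.Ico 1 n, (psi n h + psi n (n - h)) := by
      apply Finset.sum_le_sum
      intro h hh
      rw [Finset.mem_Ico] at hh
      have := normSq_gam_le n h hn hh.1 hh.2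
      rcases Nat.le_total h (n - h) with hle | hle
      · have : min h (n - h) = h := by omega
        calc Complex.normSq (gam n (h:ℤ)) ≤ psi n (min h (n - h)) :=
              normSq_gam_le n h hn hh.1 hh.2
          _ = psi n h := by rw [this]
          _ ≤ psi n h + psi n (n - h) := by linarith [psi_nonneg n (n - h)]
      · have : min h (n - h) = n - h := by omega
        calc Complex.normSq (gam n (h:ℤ)) ≤ psi n (min h (n - h)) :=
              normSq_gam_le n h hn hh.1 hh.2
          _ = psi n (n - h) := by rw [this]
          _ ≤ psi n h + psi n (n - h) := by linarith [psi_nonneg n h]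
    have hrefl : ∑ h ∈ Finset.Ico 1 n, psi n (n - h) = ∑ h ∈ Finset.Ico 1 n, psi n h := by
      refine Finset.sum_nbij' (fun h => n - h) (fun h => n - h) ?_ ?_ ?_ ?_ ?_
      · intro x hx; rw [Finset.mem_Ico] at hx ⊢; omega
      · intro x hx; rw [Finset.mem_Ico] at hx ⊢; omega
      · intro x hx; rw [Finset.mem_Ico] at hx; omega
      · intro x hx; rw [Finset.mem_Ico] at hx; omega
      · intro x _; rfl
    rw [Finset.sum_add_distrib, hrefl] at hle
    have hps := psi_sum n hn
    nlinarith [hps, hle]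
end NewmanAux

/-- **Newman's `L⁴` lemma for Gauss sums.** There is `C > 0` such
that for all `n ≥ 1`,
`| ∫_{S¹} |∑_{j<n} e^{iπj²/n} z^j|⁴ dz - n² | ≤ C n^{3/2}`. -/
theorem statement16 :
    ∃ C : ℝ, 0 < C ∧
      ∀ n : ℕ, 1 ≤ n →
        |(1 / (2 * Real.pi)) *
            (∫ t in (0:ℝ)..(2 * Real.pi),
              ‖(∑ j ∈ Finset.range n,
                    Complex.exp (Complex.I * (Real.pi : ℂ) * (j : ℂ) ^ 2 / (n : ℂ)) *
                      Complex.exp (Complex.I * (t : ℂ)) ^ j)‖ ^ 4) -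
          (n : ℝ) ^ 2| ≤ C * (n : ℝ) ^ ((3:ℝ) / 2) := by
  refine ⟨Real.pi ^ 2 + 2, by positivity, ?_⟩
  intro n hn
  have hA := stepA n hn
  have hB := stepB n hn
  simp only [aa] at hA
  rw [hA]
  rw [abs_of_nonneg (by linarith [hB.1])]
  have hn0 : (0:ℝ) < n := by exact_mod_cast Nat.pos_of_ne_zero (by omega)
  have hr : (n:ℝ) ^ ((3:ℝ)/2) = Real.sqrt n * n := by
    rw [show (3:ℝ)/2 = 1/2 + 1 by norm_num, Real.rpow_add hn0, Real.rpow_one,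
      ← Real.sqrt_eq_rpow]
  rw [hr]
  linarith [hB.2]
end

section
/- (Newman's L¹ lemma.) For n ≥ 1, let P_n(z) = (1/√n) ∑_{j=0}^{n−1} e^{iπj²/n} z^j. Then ‖P_n‖₁ = ∫_{S¹} |P_n(z)| dz → 1 as n → ∞. -/
open Filter MeasureTheory Finset

/-- The Gauss–Fresnel polynomial `P_n(z) = (1/√n) ∑_{j=0}^{n-1} e^{iπj²/n} z^j`,
evaluated at `z = e^{it}`. -/
noncomputable def gaussFresnel (n : ℕ) (t : ℝ) : ℂ :=
  (1 / (Real.sqrt n : ℂ)) *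
    ∑ j ∈ Finset.range n,
      Complex.exp (Complex.I * (Real.pi : ℂ) * (j : ℂ) ^ 2 / (n : ℂ)) *
        Complex.exp (Complex.I * (t : ℂ)) ^ j

section NewmanAux

noncomputable def cc (n j : ℕ) : ℂ :=
  Complex.exp (Complex.I * (Real.pi : ℂ) * (j : ℂ) ^ 2 / (n : ℂ))

noncomputable def gg (n : ℕ) (t : ℝ) : ℂ :=
  ∑ j ∈ Finset.range n, cc n j * Complex.exp (Complex.I * (t : ℂ)) ^ j

noncomputable def AA (n : ℕ) (m : ℤ) : ℂ :=
  if m = 0 then 0 else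
    ∑ p ∈ (Finset.range n ×ˢ Finset.range n).filter (fun p => (p.1 : ℤ) - (p.2 : ℤ) = m),
      cc n p.1 * (starRingEnd ℂ) (cc n p.2)

lemma abs_exp_I_sub_one (θ : ℝ) :
    ‖Complex.exp (Complex.I * θ) - 1‖ = 2 * |Real.sin (θ/2)| := by
  have h : Complex.I * θ = (θ:ℂ) * Complex.I := by ring
  rw [h, Complex.norm_def, Complex.normSq_apply]
  simp only [Complex.sub_re, Complex.sub_im, Complex.exp_ofReal_mul_I_re,
    Complex.exp_ofReal_mul_I_im, Complex.one_re, Complex.one_im]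
  have hc : Real.cos θ = 1 - 2 * Real.sin (θ/2)^2 := by
    have := Real.cos_two_mul' (θ/2)
    have h2 : 2 * (θ/2) = θ := by ring
    rw [h2] at this
    nlinarith [Real.sin_sq_add_cos_sq (θ/2)]
  have key : (Real.cos θ - 1) * (Real.cos θ - 1) + (Real.sin θ - 0) * (Real.sin θ - 0)
      = (2 * |Real.sin (θ/2)|)^2 := by
    rw [show (2*|Real.sin (θ/2)|)^2 = 4 * Real.sin (θ/2)^2 by
      rw [mul_pow, _root_.sq_abs]; ring]
    nlinarith [Real.sin_sq_add_cos_sq θ]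
  rw [key, Real.sqrt_sq (by positivity)]

lemma orth (m : ℤ) : ∫ t in (0:ℝ)..(2*Real.pi), Complex.exp (Complex.I * m * t)
    = if m = 0 then (2*Real.pi : ℂ) else 0 := by
  split_ifs with h
  · simp [h, Complex.ofReal_ne_zero]
  · have hc : Complex.I * m ≠ 0 := by
      simp [Complex.I_ne_zero, Complex.ext_iff]
      exact_mod_cast h
    have := integral_exp_mul_complex (a := 0) (b := 2*Real.pi) hc
    simp only [mul_assoc] at this ⊢
    rw [this]
    have h1 : Complex.exp (Complex.I * (m * (2*Real.pi : ℝ))) = 1 := by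
      have h2 := Complex.exp_int_mul_two_pi_mul_I m
      rw [← h2]; push_cast; ring_nf
    rw [h1]; simp

lemma exp_c_integrable (c a : ℂ) :
    IntervalIntegrable (fun t : ℝ => a * Complex.exp (c * t)) volume 0 (2*Real.pi) := by
  apply Continuous.intervalIntegrable
  exact continuous_const.mul (Complex.continuous_exp.comp (continuous_const.mul Complex.continuous_ofReal))

lemma parseval (S : Finset ℤ) (a : ℤ → ℂ) :
    ∫ t in (0:ℝ)..(2*Real.pi),
      (∑ m ∈ S, a m * Complex.exp (Complex.I * m * t)) *
        (starRingEnd ℂ) (∑ m ∈ S, a m * Complex.exp (Complex.I * m * t))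
    = (2*Real.pi : ℂ) * ∑ m ∈ S, (Complex.normSq (a m) : ℂ) := by
  have key : ∀ t : ℝ,
      (∑ m ∈ S, a m * Complex.exp (Complex.I * m * t)) *
        (starRingEnd ℂ) (∑ m ∈ S, a m * Complex.exp (Complex.I * m * t))
      = ∑ m ∈ S, ∑ r ∈ S, (a m * (starRingEnd ℂ) (a r)) * Complex.exp (Complex.I * ((m:ℂ) - r) * t) := by
    intro t
    rw [map_sum, Finset.sum_mul]
    congr 1; ext m
    rw [Finset.mul_sum]
    congr 1; ext r
    rw [map_mul, ← Complex.exp_conj]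
    have hconj : (starRingEnd ℂ) (Complex.I * r * t) = - (Complex.I * r * t) := by
      simp [Complex.ext_iff]
    rw [hconj, show Complex.I * ((m:ℂ) - r) * t = Complex.I*m*t + -(Complex.I*r*t) by ring,
      Complex.exp_add]
    ring
  rw [intervalIntegral.integral_congr (fun t _ => key t)]
  rw [intervalIntegral.integral_finset_sum]
  · have inner : ∀ m ∈ S, (∫ t in (0:ℝ)..(2*Real.pi),
        ∑ r ∈ S, (a m * (starRingEnd ℂ) (a r)) * Complex.exp (Complex.I * ((m:ℂ) - r) * t))
        = (2*Real.pi : ℂ) * (Complex.normSq (a m) : ℂ) := by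
      intro m hm
      rw [intervalIntegral.integral_finset_sum (fun r _ => exp_c_integrable _ _)]
      have term : ∀ r ∈ S, (∫ t in (0:ℝ)..(2*Real.pi),
          (a m * (starRingEnd ℂ) (a r)) * Complex.exp (Complex.I * ((m:ℂ) - r) * t))
          = if r = m then (2*Real.pi : ℂ) * (Complex.normSq (a m) : ℂ) else 0 := by
        intro r _
        rw [intervalIntegral.integral_const_mul]
        have ho := orth (m - r)
        push_cast at ho
        rw [ho]
        split_ifs with h1 h2 h2
        · rw [h2, Complex.mul_conj]; ring
        · exfalso; exact h2 (by omega)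
        · exfalso; exact h1 (by omega)
        · ring
      rw [Finset.sum_congr rfl term, Finset.sum_ite_eq' S m
        (fun _ => (2*Real.pi : ℂ) * (Complex.normSq (a m) : ℂ))]
      simp [hm]
    rw [Finset.sum_congr rfl inner, ← Finset.mul_sum]
  · intro m _
    apply Continuous.intervalIntegrable
    apply continuous_finset_sum
    intro r _
    exact continuous_const.mul (Complex.continuous_exp.comp (continuous_const.mul Complex.continuous_ofReal))

lemma cc_abs (n j : ℕ) : ‖cc n j‖ = 1 := by
  unfold cc
  rw [show Complex.I * (Real.pi : ℂ) * (j : ℂ) ^ 2 / (n : ℂ)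
      = ((Real.pi * j^2 / n : ℝ) : ℂ) * Complex.I by push_cast; ring]
  exact Complex.norm_exp_ofReal_mul_I _

lemma cc_mul_conj (n j : ℕ) : cc n j * (starRingEnd ℂ) (cc n j) = 1 := by
  rw [Complex.mul_conj]
  norm_cast
  rw [Complex.normSq_eq_norm_sq, cc_abs]
  norm_num

lemma expand (n : ℕ) (t : ℝ) :
    ((Complex.normSq (gg n t) : ℂ)) - n
    = ∑ m ∈ Finset.Icc (1 - (n:ℤ)) ((n:ℤ) - 1), AA n m * Complex.exp (Complex.I * m * t) := by
  have h1 : (Complex.normSq (gg n t) : ℂ) = gg n t * (starRingEnd ℂ) (gg n t) :=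
    (Complex.mul_conj _).symm
  have hexp : ∀ j : ℕ, Complex.exp (Complex.I * (t:ℂ)) ^ j = Complex.exp (Complex.I * j * t) := by
    intro j
    rw [← Complex.exp_nat_mul]
    ring_nf
  have h2 : gg n t * (starRingEnd ℂ) (gg n t)
      = ∑ p ∈ Finset.range n ×ˢ Finset.range n,
          cc n p.1 * (starRingEnd ℂ) (cc n p.2) * Complex.exp (Complex.I * ((p.1:ℂ) - (p.2:ℂ)) * t) := by
    rw [Finset.sum_product]
    unfold gg
    rw [map_sum, Finset.sum_mul]
    congr 1; ext j
    rw [Finset.mul_sum]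
    congr 1; ext k
    rw [hexp, hexp, map_mul, ← Complex.exp_conj]
    have hconj : (starRingEnd ℂ) (Complex.I * k * t) = -(Complex.I * k * t) := by
      simp [Complex.ext_iff]
    rw [hconj, show Complex.I * ((j:ℂ) - k) * t = Complex.I*j*t + -(Complex.I*k*t) by ring,
      Complex.exp_add]
    ring
  rw [h1, h2]
  -- split diagonal and off-diagonal
  have hsplit : Finset.range n ×ˢ Finset.range n
      = (Finset.range n ×ˢ Finset.range n).filter (fun p => p.1 = p.2)
        ∪ (Finset.range n ×ˢ Finset.range n).filter (fun p => p.1 ≠ p.2) :=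
    (Finset.filter_union_filter_not_eq _ _).symm
  rw [hsplit, Finset.sum_union (Finset.disjoint_filter_filter_not _ _ _)]
  have hdiag : ∑ p ∈ (Finset.range n ×ˢ Finset.range n).filter (fun p => p.1 = p.2),
      cc n p.1 * (starRingEnd ℂ) (cc n p.2) * Complex.exp (Complex.I * ((p.1:ℂ) - (p.2:ℂ)) * t)
      = n := by
    have himg : (Finset.range n ×ˢ Finset.range n).filter (fun p => p.1 = p.2)
        = (Finset.range n).image (fun j => (j, j)) := by
      ext p
      simp only [Finset.mem_filter, Finset.mem_product, Finset.mem_image, Finset.mem_range]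
      constructor
      · rintro ⟨⟨h1, h2⟩, h3⟩; exact ⟨p.1, h1, by simp [Prod.ext_iff, h3]⟩
      · rintro ⟨j, hj, rfl⟩; exact ⟨⟨hj, hj⟩, rfl⟩
    rw [himg, Finset.sum_image (by intro a _ b _ h; simpa using h)]
    simp only [sub_self, mul_zero, zero_mul, Complex.exp_zero, mul_one]
    · simp only [cc_mul_conj]
      simp
  rw [hdiag]
  have hoff : ∑ p ∈ (Finset.range n ×ˢ Finset.range n).filter (fun p => p.1 ≠ p.2),
      cc n p.1 * (starRingEnd ℂ) (cc n p.2) * Complex.exp (Complex.I * ((p.1:ℂ) - (p.2:ℂ)) * t)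
      = ∑ m ∈ Finset.Icc (1 - (n:ℤ)) ((n:ℤ) - 1), AA n m * Complex.exp (Complex.I * m * t) := by
    rw [← Finset.sum_fiberwise_of_maps_to (g := fun p : ℕ × ℕ => (p.1:ℤ) - (p.2:ℤ))
      (t := Finset.Icc (1 - (n:ℤ)) ((n:ℤ) - 1))]
    · congr 1; ext m
      by_cases hm : m = 0
      · subst hm
        have hempty : ((Finset.range n ×ˢ Finset.range n).filter (fun p => p.1 ≠ p.2)).filter
            (fun p => (p.1:ℤ) - (p.2:ℤ) = 0) = ∅ := by
          ext p
          simp only [Finset.mem_filter, Finset.notMem_empty, iff_false]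
          rintro ⟨⟨_, hne⟩, heq⟩
          exact hne (by omega)
        rw [hempty]
        simp [AA]
      · have heqf : ((Finset.range n ×ˢ Finset.range n).filter (fun p => p.1 ≠ p.2)).filter
            (fun p => (p.1:ℤ) - (p.2:ℤ) = m)
            = (Finset.range n ×ˢ Finset.range n).filter (fun p => (p.1:ℤ) - (p.2:ℤ) = m) := by
          rw [Finset.filter_filter]
          apply Finset.filter_congr
          intro p _
          constructor
          · rintro ⟨_, h⟩; exact h
          · intro h; exact ⟨fun he => hm (by omega), h⟩
        rw [heqf, AA, if_neg hm, Finset.sum_mul]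
        apply Finset.sum_congr rfl
        intro p hp
        simp only [Finset.mem_filter] at hp
        rw [show ((p.1:ℂ) - (p.2:ℂ)) = (m:ℂ) by exact_mod_cast congrArg (Int.cast : ℤ → ℂ) hp.2]
    · intro p hp
      simp only [Finset.mem_filter, Finset.mem_product, Finset.mem_range] at hp
      simp only [Finset.mem_Icc]
      omega
  rw [hoff]
  ring

lemma AA_abs (n m : ℕ) (h1 : 1 ≤ m) (h2 : m < n) :
    ‖AA n (m:ℤ)‖
      = |Real.sin (Real.pi * m^2 / n)| / Real.sin (Real.pi * m / n) := by
  have hn : (0:ℝ) < n := by exact_mod_cast (by omega : 0 < n)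
  have hnC : (n:ℂ) ≠ 0 := by exact_mod_cast hn.ne'
  -- fiber as image
  have himg : ((Finset.range n ×ˢ Finset.range n).filter
        (fun p => (p.1 : ℤ) - (p.2 : ℤ) = (m:ℤ)))
      = (Finset.range (n - m)).image (fun k => (k + m, k)) := by
    ext p
    simp only [Finset.mem_filter, Finset.mem_product, Finset.mem_image, Finset.mem_range]
    constructor
    · rintro ⟨⟨ha, hb⟩, hc⟩
      exact ⟨p.2, by omega, by
        have : p.1 = p.2 + m := by omega
        simp [Prod.ext_iff, this]⟩
    · rintro ⟨k, hk, rfl⟩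
      refine ⟨⟨by omega, by omega⟩, by push_cast; ring⟩
  have hm0 : (m:ℤ) ≠ 0 := by exact_mod_cast (by omega : m ≠ 0)
  set θ : ℝ := 2 * Real.pi * m / n with hθ
  have hθC : ((θ : ℝ) : ℂ) = 2 * (Real.pi:ℂ) * m / n := by rw [hθ]; push_cast; ring
  set ω : ℂ := Complex.exp (Complex.I * θ) with hω
  have hterm : ∀ k : ℕ, cc n (k + m) * (starRingEnd ℂ) (cc n k)
      = Complex.exp (Complex.I * Real.pi * (m:ℂ)^2 / n) * ω ^ k := by
    intro k
    unfold cc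
    rw [← Complex.exp_conj]
    have hcj : (starRingEnd ℂ) (Complex.I * (Real.pi:ℂ) * (k:ℂ)^2 / (n:ℂ))
        = -(Complex.I * (Real.pi:ℂ) * (k:ℂ)^2 / (n:ℂ)) := by
      rw [show Complex.I * (Real.pi:ℂ) * (k:ℂ)^2 / (n:ℂ)
          = ((Real.pi * k^2 / n : ℝ):ℂ) * Complex.I by push_cast; ring]
      simp [Complex.ext_iff]
    rw [hcj, ← Complex.exp_add, hω, ← Complex.exp_nat_mul, ← Complex.exp_add]
    congr 1
    rw [show ((k:ℂ)) * (Complex.I * (θ:ℂ)) = (k:ℂ) * Complex.I * ((θ:ℝ):ℂ) by ring, hθC]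
    push_cast
    field_simp
    ring
  have hAA : AA n (m:ℤ) = Complex.exp (Complex.I * Real.pi * (m:ℂ)^2 / n)
      * ∑ k ∈ Finset.range (n - m), ω ^ k := by
    rw [AA, if_neg hm0, himg, Finset.sum_image (by intro a _ b _ h; simpa [Prod.ext_iff] using h)]
    rw [Finset.mul_sum]
    exact Finset.sum_congr rfl fun k _ => hterm k
  have hω1 : ω ≠ 1 := by
    intro hone
    rw [hω, Complex.exp_eq_one_iff] at hone
    obtain ⟨z, hz⟩ := hone
    have hz' : ((θ:ℝ):ℂ) = ((z * (2*Real.pi) : ℝ):ℂ) := by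
      apply mul_left_cancel₀ Complex.I_ne_zero
      rw [hz]
      push_cast
      ring
    have hzr : θ = z * (2*Real.pi) := by exact_mod_cast hz'
    rw [hθ] at hzr
    have hmn : (m:ℝ) = z * n := by
      field_simp at hzr
      nlinarith [Real.pi_pos]
    have hmz : (m:ℤ) = z * n := by exact_mod_cast hmn
    rcases le_or_gt z 0 with hz0 | hz0
    · have : (z:ℤ) * n ≤ 0 := mul_nonpos_of_nonpos_of_nonneg hz0 (by positivity)
      omega
    · have hz1 : (1:ℤ) ≤ z := hz0
      have : (n:ℤ) ≤ z * n := le_mul_of_one_le_left (by positivity) hz1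
      omega
  have hgeom : ∑ k ∈ Finset.range (n - m), ω ^ k = (ω ^ (n - m) - 1) / (ω - 1) :=
    geom_sum_eq hω1 _
  have habs1 : ‖Complex.exp (Complex.I * Real.pi * (m:ℂ)^2 / n)‖ = 1 := by
    rw [show Complex.I * (Real.pi:ℂ) * (m:ℂ)^2 / (n:ℂ)
        = ((Real.pi * m^2 / n : ℝ):ℂ) * Complex.I by push_cast; ring]
    exact Complex.norm_exp_ofReal_mul_I _
  have hωpow : ω ^ (n - m) = Complex.exp (Complex.I * (((-2) * Real.pi * m^2 / n : ℝ):ℂ)) := by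
    rw [hω, ← Complex.exp_nat_mul]
    have hsplit : ((n - m : ℕ):ℂ) * (Complex.I * (θ:ℂ))
        = Complex.I * (((-2) * Real.pi * m^2 / n : ℝ):ℂ) + (m:ℤ) * (2 * Real.pi * Complex.I) := by
      have hc : ((n - m : ℕ):ℂ) = (n:ℂ) - m := by
        push_cast [Nat.cast_sub h2.le]; ring
      rw [hc, show ((n:ℂ) - m) * (Complex.I * (θ:ℂ)) = ((n:ℂ) - m) * Complex.I * ((θ:ℝ):ℂ) by ring,
        hθC]
      push_cast
      field_simp
      ring
    rw [hsplit, Complex.exp_add, Complex.exp_int_mul_two_pi_mul_I, mul_one]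
  have hsinpos : 0 < Real.sin (Real.pi * m / n) := by
    apply Real.sin_pos_of_pos_of_lt_pi
    · have : (0:ℝ) < (m:ℝ) := by exact_mod_cast h1
      positivity
    · rw [div_lt_iff₀ hn]
      have hmr : (m:ℝ) < n := by exact_mod_cast h2
      nlinarith [Real.pi_pos]
  rw [hAA, norm_mul, habs1, one_mul, hgeom, norm_div, hωpow]
  rw [abs_exp_I_sub_one, abs_exp_I_sub_one]
  rw [show ((-2) * Real.pi * m^2 / n) / 2 = -(Real.pi * m^2 / n) by ring,
    Real.sin_neg, abs_neg]
  rw [show θ / 2 = Real.pi * m / n by rw [hθ]; ring]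
  rw [abs_of_pos hsinpos, mul_div_mul_left _ _ (two_ne_zero)]

lemma AA_bound (n m : ℕ) (h1 : 1 ≤ m) (h2 : m < n) :
    ‖AA n (m:ℤ)‖ ≤ (Real.pi/2) * (min m (n-m) : ℕ) ∧
    ‖AA n (m:ℤ)‖ ≤ (n:ℝ) / (2 * (min m (n-m) : ℕ)) := by
  set k := min m (n - m) with hk
  have hk1 : 1 ≤ k := by omega
  have hk2 : 2 * k ≤ n := by omega
  have hn : (0:ℝ) < n := by exact_mod_cast (by omega : 0 < n)
  have hkR : (0:ℝ) < k := by exact_mod_cast hk1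
  have hπ := Real.pi_pos
  -- denominator equality
  have hden : Real.sin (Real.pi * m / n) = Real.sin (Real.pi * k / n) := by
    rcases le_total m (n - m) with h | h
    · rw [hk, min_eq_left h]
    · rw [hk, min_eq_right h]
      have hc : ((n - m : ℕ) : ℝ) = (n:ℝ) - m := by
        push_cast [Nat.cast_sub h2.le]; ring
      rw [hc, show Real.pi * ((n:ℝ) - m) / n = Real.pi - Real.pi * m / n by
        field_simp]
      rw [Real.sin_pi_sub]
  -- numerator equality
  have hnum : |Real.sin (Real.pi * m^2 / n)| = |Real.sin (Real.pi * k^2 / n)| := by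
    rcases le_total m (n - m) with h | h
    · rw [hk, min_eq_left h]
    · rw [hk, min_eq_right h]
      have h2m : n ≤ 2 * m := by omega
      set z : ℕ := 2 * m - n with hz
      have hsq : (m:ℝ)^2 = ((n - m : ℕ):ℝ)^2 + n * z := by
        rw [hz]
        push_cast [Nat.cast_sub h2.le, Nat.cast_sub h2m]
        ring
      have harg : Real.pi * m^2 / n = Real.pi * ((n-m:ℕ):ℝ)^2 / n + z * Real.pi := by
        rw [hsq]; field_simp
      rw [harg, Real.sin_add_nat_mul_pi, abs_mul, _root_.abs_pow, abs_neg, abs_one, one_pow, one_mul]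
  have hsinpos : 0 < Real.sin (Real.pi * k / n) := by
    apply Real.sin_pos_of_pos_of_lt_pi
    · positivity
    · rw [div_lt_iff₀ hn]
      have hkn : (k:ℝ) < n := by exact_mod_cast (by omega : k < n)
      nlinarith
  have hden_ge : 2 * (k:ℝ) / n ≤ Real.sin (Real.pi * k / n) := by
    have hx1 : (0:ℝ) ≤ Real.pi * k / n := by positivity
    have hx2 : Real.pi * k / n ≤ Real.pi / 2 := by
      rw [div_le_div_iff₀ hn (by norm_num : (0:ℝ) < 2)]
      have : (2:ℝ) * k ≤ n := by exact_mod_cast hk2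
      nlinarith
    have := Real.mul_le_sin hx1 hx2
    calc 2 * (k:ℝ) / n = 2 / Real.pi * (Real.pi * k / n) := by field_simp
    _ ≤ _ := this
  rw [AA_abs n m h1 h2, hden, hnum]
  constructor
  · have hnumle : |Real.sin (Real.pi * k^2 / n)| ≤ Real.pi * k^2 / n := by
      calc |Real.sin (Real.pi * k^2 / n)| ≤ |Real.pi * k^2 / n| :=
            le_of_lt (Real.abs_sin_lt_abs (by positivity))
      _ = Real.pi * k^2 / n := abs_of_pos (by positivity)
    calc |Real.sin (Real.pi * k^2 / n)| / Real.sin (Real.pi * k / n)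
        ≤ (Real.pi * k^2 / n) / (2 * (k:ℝ) / n) :=
          div_le_div₀ (by positivity) hnumle (by positivity) hden_ge
    _ = (Real.pi/2) * k := by field_simp
  · have hnumle : |Real.sin (Real.pi * k^2 / n)| ≤ 1 := by
      rw [abs_le]; exact ⟨Real.neg_one_le_sin _, Real.sin_le_one _⟩
    calc |Real.sin (Real.pi * k^2 / n)| / Real.sin (Real.pi * k / n)
        ≤ 1 / (2 * (k:ℝ) / n) := div_le_div₀ (by norm_num) hnumle (by positivity) hden_ge
    _ = (n:ℝ) / (2 * k) := by field_simp

lemma AA_neg (n : ℕ) (m : ℤ) : AA n (-m) = (starRingEnd ℂ) (AA n m) := by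
  unfold AA
  by_cases hm : m = 0
  · simp [hm]
  · rw [if_neg (by omega), if_neg hm]
    rw [map_sum]
    refine Finset.sum_nbij' (fun p => (p.2, p.1)) (fun p => (p.2, p.1)) ?_ ?_ ?_ ?_ ?_
    · intro p hp
      simp only [Finset.mem_filter, Finset.mem_product] at hp ⊢
      exact ⟨⟨hp.1.2, hp.1.1⟩, by omega⟩
    · intro p hp
      simp only [Finset.mem_filter, Finset.mem_product] at hp ⊢
      exact ⟨⟨hp.1.2, hp.1.1⟩, by omega⟩
    · intro p _; rfl
    · intro p _; rfl
    · intro p _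
      rw [map_mul, RingHomCompTriple.comp_apply]
      simp [mul_comm]

lemma sum_inv_sq' (K : ℕ) (hK : 1 ≤ K) :
    ∀ M, K ≤ M → ∑ m ∈ Finset.Ioc K M, (1:ℝ)/(m^2) ≤ 1/K - 1/M := by
  intro M
  induction M with
  | zero => intro h; interval_cases K <;> simp
  | succ M ih =>
    intro hKM
    rcases Nat.lt_or_ge K (M+1) with h | h
    · have hKM' : K ≤ M := by omega
      rw [Finset.sum_Ioc_succ_top hKM']
      have hMR : (0:ℝ) < M + 1 := by positivity
      have hM1 : (1:ℝ) ≤ M := by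
        have : 1 ≤ M := le_trans hK hKM'
        exact_mod_cast this
      have step : (1:ℝ)/((M+1:ℕ)^2) ≤ 1/M - 1/(M+1:ℕ) := by
        push_cast
        rw [div_sub_div _ _ (by nlinarith) (by nlinarith)]
        apply div_le_div₀ (by nlinarith) (by nlinarith) (by nlinarith) (by nlinarith)
      have := ih hKM'
      push_cast at this step ⊢
      linarith
    · have hKe : K = M + 1 := by omega
      subst hKe
      simp

lemma sum_inv_sq (K M : ℕ) (hK : 1 ≤ K) :
    ∑ m ∈ Finset.Ioc K M, (1:ℝ)/(m^2) ≤ 1/K := by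
  rcases le_or_gt M K with h | h
  · rw [Finset.Ioc_eq_empty (by omega)]
    simp
  · have := sum_inv_sq' K hK M h.le
    have hM : (0:ℝ) < M := by exact_mod_cast (by omega : 0 < M)
    have : (0:ℝ) ≤ 1/M := by positivity
    linarith [sum_inv_sq' K hK M h.le]

lemma sum_AA_bound (n : ℕ) (hn : 4 ≤ n) :
    ∑ m ∈ Finset.Icc (1-(n:ℤ)) ((n:ℤ)-1), Complex.normSq (AA n m)
      ≤ 24 * n * Real.sqrt n := by
  classical
  set w : ℕ → ℝ := fun k => min ((Real.pi^2/4) * k^2) ((n:ℝ)^2/(4 * k^2)) with hw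
  have hw0 : ∀ k, 0 ≤ w k := by
    intro k
    apply le_min <;> positivity
  set g : ℕ → ℝ := fun k => if k = 0 then 0 else w (min k (n - k)) with hg
  -- per-term bound
  have hf_le : ∀ m ∈ Finset.Icc (1-(n:ℤ)) ((n:ℤ)-1), Complex.normSq (AA n m) ≤ g m.natAbs := by
    intro m hm
    simp only [Finset.mem_Icc] at hm
    by_cases hm0 : m = 0
    · simp [hm0, AA, hg]
    · have hk1 : 1 ≤ m.natAbs := by omega
      have hk2 : m.natAbs < n := by omega
      have hsq : Complex.normSq (AA n m) = ‖AA n (m.natAbs : ℤ)‖^2 := by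
        rcases Int.natAbs_eq m with he | he
        · rw [← Complex.sq_norm, ← he]
        · rw [← Complex.sq_norm]
          rw [show ((m.natAbs : ℤ)) = -m by omega, AA_neg]
          simp
      obtain ⟨hb1, hb2⟩ := AA_bound n m.natAbs hk1 hk2
      rw [hsq, hg]
      simp only [if_neg (by omega : ¬ m.natAbs = 0)]
      set k := min m.natAbs (n - m.natAbs) with hkdef
      have hkk1 : 1 ≤ k := by omega
      have hkR : (0:ℝ) < k := by exact_mod_cast hkk1
      apply le_min
      · calc ‖AA n (m.natAbs : ℤ)‖^2 ≤ ((Real.pi/2) * k)^2 := by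
              apply pow_le_pow_left₀ (norm_nonneg _) hb1
        _ = (Real.pi^2/4) * k^2 := by ring
      · calc ‖AA n (m.natAbs : ℤ)‖^2 ≤ ((n:ℝ) / (2*k))^2 := by
              apply pow_le_pow_left₀ (norm_nonneg _) hb2
        _ = (n:ℝ)^2/(4 * k^2) := by rw [div_pow]; ring_nf
  -- fiberwise: sum over ℤ-interval ≤ 2 * sum of g over range n
  have hmaps : ∀ m ∈ Finset.Icc (1-(n:ℤ)) ((n:ℤ)-1), m.natAbs ∈ Finset.range n := by
    intro m hm
    simp only [Finset.mem_Icc] at hm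
    simp only [Finset.mem_range]
    omega
  have hfiber := Finset.sum_fiberwise_of_maps_to hmaps (fun m => Complex.normSq (AA n m))
  rw [← hfiber]
  have hstep1 : ∑ k ∈ Finset.range n, (∑ m ∈ (Finset.Icc (1-(n:ℤ)) ((n:ℤ)-1)).filter
        (fun m => m.natAbs = k), Complex.normSq (AA n m))
      ≤ ∑ k ∈ Finset.range n, 2 * g k := by
    apply Finset.sum_le_sum
    intro k hk
    have hsub : (Finset.Icc (1-(n:ℤ)) ((n:ℤ)-1)).filter (fun m => m.natAbs = k)
        ⊆ {(k:ℤ), -(k:ℤ)} := by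
      intro m hm
      simp only [Finset.mem_filter] at hm
      simp only [Finset.mem_insert, Finset.mem_singleton]
      omega
    have hcard : ((Finset.Icc (1-(n:ℤ)) ((n:ℤ)-1)).filter (fun m => m.natAbs = k)).card ≤ 2 := by
      calc _ ≤ ({(k:ℤ), -(k:ℤ)} : Finset ℤ).card := Finset.card_le_card hsub
      _ ≤ 2 := Finset.card_insert_le _ _ |>.trans (by simp)
    calc ∑ m ∈ (Finset.Icc (1-(n:ℤ)) ((n:ℤ)-1)).filter (fun m => m.natAbs = k),
          Complex.normSq (AA n m)
        ≤ ∑ m ∈ (Finset.Icc (1-(n:ℤ)) ((n:ℤ)-1)).filter (fun m => m.natAbs = k), g k := by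
          apply Finset.sum_le_sum
          intro m hm
          simp only [Finset.mem_filter] at hm
          rw [← hm.2]
          exact hf_le m hm.1
    _ = ((Finset.Icc (1-(n:ℤ)) ((n:ℤ)-1)).filter (fun m => m.natAbs = k)).card * g k := by
          rw [Finset.sum_const, nsmul_eq_mul]
    _ ≤ 2 * g k := by
          have hg0 : 0 ≤ g k := by
            rw [hg]; dsimp only; split <;> [rfl; exact hw0 _]
          apply mul_le_mul_of_nonneg_right _ hg0
          exact_mod_cast hcard
  refine le_trans hstep1 ?_
  -- now bound 2 * ∑ g
  set K := Nat.sqrt n with hK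
  have hK2 : 2 ≤ K := by
    rw [hK, Nat.le_sqrt]
    omega
  have hKn : K ≤ n := Nat.sqrt_le_self n
  have hnR : (0:ℝ) < n := by exact_mod_cast (by omega : 0 < n)
  have hsqrt_pos : 0 < Real.sqrt n := Real.sqrt_pos.2 hnR
  have hsqrt1 : 1 ≤ Real.sqrt n := by
    rw [show (1:ℝ) = Real.sqrt 1 by simp]
    exact Real.sqrt_le_sqrt (by exact_mod_cast (by omega : 1 ≤ n))
  have hKle : (K:ℝ) ≤ Real.sqrt n := by
    rw [show ((K:ℕ):ℝ) = Real.sqrt ((K:ℝ)^2) by rw [Real.sqrt_sq (by positivity)]]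
    apply Real.sqrt_le_sqrt
    exact_mod_cast Nat.sqrt_le' n
  have hKge : Real.sqrt n ≤ 2 * K := by
    have h1 : Real.sqrt n ≤ K + 1 := by
      rw [show ((K:ℝ) + 1) = Real.sqrt (((K:ℝ)+1)^2) by rw [Real.sqrt_sq (by positivity)]]
      apply Real.sqrt_le_sqrt
      have h0 : n ≤ (K+1)*(K+1) := (Nat.lt_succ_sqrt n).le
      have h1 : (n:ℝ) ≤ ((K:ℝ)+1)*((K:ℝ)+1) := by exact_mod_cast h0
      nlinarith
    have hKR : (2:ℝ) ≤ K := by exact_mod_cast hK2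
    linarith
  -- w k ≤ quadratic / inverse-quadratic branches
  have hw_quad : ∀ k : ℕ, w k ≤ (Real.pi^2/4) * k^2 := fun k => min_le_left _ _
  have hw_inv : ∀ k : ℕ, w k ≤ (n:ℝ)^2/(4 * k^2) := fun k => min_le_right _ _
  -- sum of w over range (n+1)
  have hW : ∑ k ∈ Finset.range (n+1), w k ≤ 6 * n * Real.sqrt n := by
    have hsplit : Finset.range (n+1) = Finset.Icc 0 K ∪ Finset.Ioc K n := by
      ext x
      simp only [Finset.mem_range, Finset.mem_union, Finset.mem_Icc, Finset.mem_Ioc]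
      omega
    have hdisj : Disjoint (Finset.Icc 0 K) (Finset.Ioc K n) := by
      rw [Finset.disjoint_left]
      intro x hx hx'
      simp only [Finset.mem_Icc] at hx
      simp only [Finset.mem_Ioc] at hx'
      omega
    rw [hsplit, Finset.sum_union hdisj]
    have hsum1 : ∑ k ∈ Finset.Icc 0 K, w k ≤ 5 * n * Real.sqrt n := by
      have hterm : ∀ k ∈ Finset.Icc 0 K, w k ≤ (Real.pi^2/4) * K^2 := by
        intro k hk
        simp only [Finset.mem_Icc] at hk
        refine le_trans (hw_quad k) (mul_le_mul_of_nonneg_left ?_ (by positivity))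
        have : (k:ℝ) ≤ K := by exact_mod_cast hk.2
        have hk0 : (0:ℝ) ≤ k := by positivity
        nlinarith
      calc ∑ k ∈ Finset.Icc 0 K, w k ≤ ∑ k ∈ Finset.Icc 0 K, (Real.pi^2/4) * K^2 :=
            Finset.sum_le_sum hterm
      _ = (K+1 : ℕ) * ((Real.pi^2/4) * K^2) := by
            rw [Finset.sum_const, nsmul_eq_mul, Nat.card_Icc]
            norm_num
      _ ≤ 5 * n * Real.sqrt n := by
            have hpi : Real.pi ^ 2 ≤ 10 := by nlinarith [Real.pi_lt_d2, Real.pi_pos]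
            have hcube : (K:ℝ)^3 ≤ n * Real.sqrt n := by
              calc (K:ℝ)^3 ≤ (Real.sqrt n)^3 :=
                    pow_le_pow_left₀ (by positivity) hKle 3
              _ = n * Real.sqrt n := by
                    rw [pow_succ, show ((Real.sqrt n)^2 : ℝ) = n from Real.sq_sqrt hnR.le]
            have hsq' : (K:ℝ)^2 ≤ n * Real.sqrt n := by
              have h1 : (K:ℝ)^2 ≤ n := by exact_mod_cast Nat.sqrt_le' n
              nlinarith
            have hKR0 : (0:ℝ) ≤ K := by positivity
            push_cast
            nlinarith [Real.pi_pos]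
    have hsum2 : ∑ k ∈ Finset.Ioc K n, w k ≤ (n:ℝ) * Real.sqrt n := by
      calc ∑ k ∈ Finset.Ioc K n, w k ≤ ∑ k ∈ Finset.Ioc K n, (n:ℝ)^2/4 * (1/(k^2)) := by
            apply Finset.sum_le_sum
            intro k _
            refine le_trans (hw_inv k) (le_of_eq ?_)
            rw [div_mul_div_comm, mul_one]
      _ = (n:ℝ)^2/4 * ∑ k ∈ Finset.Ioc K n, (1:ℝ)/(k^2) := by rw [Finset.mul_sum]
      _ ≤ (n:ℝ)^2/4 * (1/K) := by
            apply mul_le_mul_of_nonneg_left (sum_inv_sq K n (by omega)) (by positivity)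
      _ ≤ (n:ℝ) * Real.sqrt n := by
            have hKpos : (0:ℝ) < K := by exact_mod_cast (by omega : 0 < K)
            rw [mul_one_div, div_le_iff₀ hKpos]
            have h2 : (n:ℝ)^2 = (n * Real.sqrt n) * (2 * Real.sqrt n) / 2 := by
              rw [show (n:ℝ) * Real.sqrt n * (2 * Real.sqrt n) / 2
                  = n * (Real.sqrt n * Real.sqrt n) by ring,
                Real.mul_self_sqrt hnR.le]
              ring
            calc (n:ℝ)^2/4 = (n * Real.sqrt n) * (2 * Real.sqrt n) / 8 := by rw [h2]; ring
            _ ≤ (n * Real.sqrt n) * (4 * K) / 8 := by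
                  have hfac : (2:ℝ) * Real.sqrt n ≤ 4 * K := by linarith
                  have hnn : (0:ℝ) ≤ (n:ℝ) * Real.sqrt n := by positivity
                  have hm := mul_le_mul_of_nonneg_left hfac hnn
                  linarith
            _ ≤ (n:ℝ) * Real.sqrt n * K := by
                  rw [show (n:ℝ) * Real.sqrt n * (4*K) / 8 = (n:ℝ) * Real.sqrt n * K / 2 by ring]
                  have : (0:ℝ) ≤ (n:ℝ) * Real.sqrt n * K := by positivity
                  linarith
    linarith
  -- g k ≤ w k + w (n - k)
  have hgle : ∀ k ∈ Finset.range n, 2 * g k ≤ 2 * (w k + w (n - k)) := by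
    intro k _
    apply mul_le_mul_of_nonneg_left _ (by norm_num)
    rw [hg]
    dsimp only
    split
    · have := hw0 k; have := hw0 (n - k); linarith
    · rcases le_total k (n - k) with h | h
      · rw [min_eq_left h]; linarith [hw0 (n-k)]
      · rw [min_eq_right h]; linarith [hw0 k]
  calc ∑ k ∈ Finset.range n, 2 * g k ≤ ∑ k ∈ Finset.range n, 2 * (w k + w (n-k)) :=
        Finset.sum_le_sum hgle
  _ = 2 * (∑ k ∈ Finset.range n, w k + ∑ k ∈ Finset.range n, w (n-k)) := by
        rw [← Finset.sum_add_distrib, Finset.mul_sum]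
  _ ≤ 2 * (∑ k ∈ Finset.range (n+1), w k + ∑ k ∈ Finset.range (n+1), w k) := by
        have h1 : ∑ k ∈ Finset.range n, w k ≤ ∑ k ∈ Finset.range (n+1), w k := by
          apply Finset.sum_le_sum_of_subset_of_nonneg
          · exact Finset.range_subset_range.2 (by omega)
          · intro i _ _; exact hw0 i
        have h2 : ∑ k ∈ Finset.range n, w (n-k) ≤ ∑ k ∈ Finset.range (n+1), w k := by
          have hrefl : ∑ k ∈ Finset.range n, w (n-k) = ∑ k ∈ Finset.range n, w (k+1) := by
            rw [← Finset.sum_range_reflect]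
            apply Finset.sum_congr rfl
            intro j hj
            simp only [Finset.mem_range] at hj
            congr 1
            omega
          rw [hrefl]
          rw [Finset.sum_range_succ' w n]
          have := hw0 0
          have hle : ∑ k ∈ Finset.range n, w (k+1) ≤ ∑ k ∈ Finset.range n, w (k+1) + w 0 :=
            by linarith
          exact hle
        linarith
  _ ≤ 2 * (6 * n * Real.sqrt n + 6 * n * Real.sqrt n) := by linarith
  _ = 24 * n * Real.sqrt n := by ring

lemma gg_continuous (n : ℕ) : Continuous (fun t : ℝ => gg n t) := by
  unfold gg
  apply continuous_finset_sum
  intro j _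
  exact continuous_const.mul
    ((Complex.continuous_exp.comp (continuous_const.mul Complex.continuous_ofReal)).pow j)

lemma L2_identity (n : ℕ) :
    ∫ t in (0:ℝ)..(2*Real.pi), (Complex.normSq (gg n t) - (n:ℝ))^2
    = (2*Real.pi) * ∑ m ∈ Finset.Icc (1-(n:ℤ)) ((n:ℤ)-1), Complex.normSq (AA n m) := by
  have hC : ((∫ t in (0:ℝ)..(2*Real.pi), (Complex.normSq (gg n t) - (n:ℝ))^2 : ℝ) : ℂ)
      = ((2*Real.pi : ℝ) * ∑ m ∈ Finset.Icc (1-(n:ℤ)) ((n:ℤ)-1), Complex.normSq (AA n m) : ℝ) := by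
    rw [← intervalIntegral.integral_ofReal]
    have hpt : ∀ t : ℝ, (((Complex.normSq (gg n t) - (n:ℝ))^2 : ℝ) : ℂ)
        = (∑ m ∈ Finset.Icc (1-(n:ℤ)) ((n:ℤ)-1), AA n m * Complex.exp (Complex.I * m * t)) *
          (starRingEnd ℂ) (∑ m ∈ Finset.Icc (1-(n:ℤ)) ((n:ℤ)-1),
            AA n m * Complex.exp (Complex.I * m * t)) := by
      intro t
      rw [← expand n t]
      rw [show ((Complex.normSq (gg n t) : ℂ)) - n
          = (((Complex.normSq (gg n t) - (n:ℝ) : ℝ)) : ℂ) by push_cast; ring]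
      rw [Complex.conj_ofReal]
      norm_cast
      ring
    rw [intervalIntegral.integral_congr (fun t _ => hpt t), parseval]
    push_cast
    ring
  exact_mod_cast hC

lemma gauss_abs_sq (n : ℕ) (hn : 1 ≤ n) (t : ℝ) :
    ‖gaussFresnel n t‖^2 - 1 = (Complex.normSq (gg n t) - (n:ℝ)) / n := by
  have hnR : (0:ℝ) < n := by exact_mod_cast hn
  have h1 : gaussFresnel n t = (1 / (Real.sqrt n : ℂ)) * gg n t := rfl
  rw [h1, Complex.sq_norm, Complex.normSq_mul]
  have h2 : Complex.normSq (1 / (Real.sqrt n : ℂ)) = 1 / n := by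
    rw [Complex.normSq_div]
    norm_cast
    rw [Complex.normSq_ofReal]
    rw [Real.mul_self_sqrt hnR.le]
    simp
  rw [h2]
  field_simp

end NewmanAux

/-- **Newman's `L¹` lemma.** The `L¹` norms of the Gauss–Fresnel
polynomials tend to `1`: `∫_{S¹} |P_n(z)| dz → 1` as `n → ∞`. -/
theorem statement17 :
    Tendsto
      (fun n : ℕ =>
        (1 / (2 * Real.pi)) *
          ∫ t in (0:ℝ)..(2 * Real.pi), ‖gaussFresnel n t‖)
      atTop (nhds 1) := by
  have hπ := Real.pi_pos
  rw [Metric.tendsto_atTop]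
  intro ε hε
  refine ⟨max 4 (⌈(32/ε^2)^2⌉₊ + 1), fun n hn => ?_⟩
  have hn4 : 4 ≤ n := le_trans (le_max_left _ _) hn
  have hn1 : 1 ≤ n := by omega
  have hnR : (0:ℝ) < n := by exact_mod_cast (by omega : 0 < n)
  have hsqrt_pos : 0 < Real.sqrt n := Real.sqrt_pos.2 hnR
  -- sqrt n is large
  have hsqrt_big : 32/ε^2 < Real.sqrt n := by
    have h1 : (⌈(32/ε^2)^2⌉₊ + 1 : ℕ) ≤ n := le_trans (le_max_right _ _) hn
    have h2 : (32/ε^2)^2 < n := by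
      have := Nat.le_ceil ((32/ε^2)^2)
      have h3 : ((⌈(32/ε^2)^2⌉₊ : ℝ) + 1) ≤ n := by exact_mod_cast h1
      linarith
    have h0 : (0:ℝ) ≤ 32/ε^2 := by positivity
    nlinarith [Real.sq_sqrt hnR.le, Real.sqrt_nonneg (n:ℝ),
      sq_nonneg (Real.sqrt n - 32/ε^2)]
  set φ : ℝ → ℝ := fun t => ‖gaussFresnel n t‖ with hφ
  have hφcont : Continuous φ := by
    rw [hφ]
    apply continuous_norm.comp
    apply continuous_const.mul
    apply continuous_finset_sum
    intro j _
    exact continuous_const.mul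
      ((Complex.continuous_exp.comp (continuous_const.mul Complex.continuous_ofReal)).pow j)
  have hφ0 : ∀ t, 0 ≤ φ t := fun t => norm_nonneg _
  -- quadratic integral bound
  have hquad : ∫ t in (0:ℝ)..(2*Real.pi), (φ t^2 - 1)^2 ≤ 2*Real.pi * (24 / Real.sqrt n) := by
    have hpt : ∀ t, (φ t^2 - 1)^2 = ((Complex.normSq (gg n t) - (n:ℝ))^2) / n^2 := by
      intro t
      rw [hφ]
      dsimp only
      rw [gauss_abs_sq n hn1 t, div_pow]
    rw [intervalIntegral.integral_congr (fun t _ => hpt t)]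
    rw [intervalIntegral.integral_div, L2_identity n]
    rw [div_le_iff₀ (by positivity : (0:ℝ) < (n:ℝ)^2)]
    have hb := sum_AA_bound n hn4
    calc 2*Real.pi * ∑ m ∈ Finset.Icc (1-(n:ℤ)) ((n:ℤ)-1), Complex.normSq (AA n m)
        ≤ 2*Real.pi * (24 * n * Real.sqrt n) := by
          apply mul_le_mul_of_nonneg_left hb (by positivity)
    _ = 2*Real.pi * (24 / Real.sqrt n * n^2) := by
          congr 1
          rw [div_mul_eq_mul_div, eq_div_iff (ne_of_gt hsqrt_pos)]
          linear_combination (24*(n:ℝ)) * Real.mul_self_sqrt hnR.le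
    _ = 2*Real.pi * (24 / Real.sqrt n) * n^2 := by ring
  -- pointwise |φ - 1| ≤ |φ² - 1| ≤ ε/4 + (φ²-1)²/ε
  have hptwise : ∀ t, |φ t - 1| ≤ ε/4 + (1/ε) * (φ t^2 - 1)^2 := by
    intro t
    have h1 : |φ t - 1| ≤ |φ t^2 - 1| := by
      have : φ t^2 - 1 = (φ t - 1) * (φ t + 1) := by ring
      rw [this, abs_mul]
      have h2 : (1:ℝ) ≤ |φ t + 1| := by
        rw [_root_.abs_of_nonneg (by linarith [hφ0 t])]
        linarith [hφ0 t]
      nlinarith [abs_nonneg (φ t - 1)]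
    have h2 : |φ t^2 - 1| ≤ ε/4 + (1/ε) * (φ t^2 - 1)^2 := by
      rw [show ε/4 + (1/ε) * (φ t^2 - 1)^2 = (ε^2 + 4*(φ t^2-1)^2)/(4*ε) by field_simp,
        le_div_iff₀ (by positivity)]
      nlinarith [sq_nonneg (2*|φ t^2 - 1| - ε), _root_.sq_abs (φ t^2 - 1)]
    linarith
  -- integral bounds
  have hint1 : IntervalIntegrable (fun t => |φ t - 1|) volume 0 (2*Real.pi) :=
    ((hφcont.sub continuous_const).abs).intervalIntegrable _ _
  have hint2 : IntervalIntegrable (fun t => ε/4 + (1/ε) * (φ t^2 - 1)^2) volume 0 (2*Real.pi) := by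
    apply Continuous.intervalIntegrable
    exact continuous_const.add (continuous_const.mul (((hφcont.pow 2).sub continuous_const).pow 2))
  have hmono : ∫ t in (0:ℝ)..(2*Real.pi), |φ t - 1|
      ≤ ∫ t in (0:ℝ)..(2*Real.pi), (ε/4 + (1/ε) * (φ t^2 - 1)^2) := by
    apply intervalIntegral.integral_mono_on (by positivity) hint1 hint2
    intro t _
    exact hptwise t
  have hrhs : ∫ t in (0:ℝ)..(2*Real.pi), (ε/4 + (1/ε) * (φ t^2 - 1)^2)
      = 2*Real.pi * (ε/4) + (1/ε) * (∫ t in (0:ℝ)..(2*Real.pi), (φ t^2 - 1)^2) := by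
    rw [intervalIntegral.integral_add (f := fun _ => ε/4) (g := fun t => (1/ε) * (φ t^2 - 1)^2) (intervalIntegrable_const)
      ((continuous_const.mul (((hφcont.pow 2).sub continuous_const).pow 2)).intervalIntegrable _ _)]
    rw [intervalIntegral.integral_const_mul, intervalIntegral.integral_const]
    simp only [smul_eq_mul, sub_zero]
  -- assemble
  have habs : |(1 / (2*Real.pi)) * (∫ t in (0:ℝ)..(2*Real.pi), φ t) - 1|
      ≤ (1/(2*Real.pi)) * ∫ t in (0:ℝ)..(2*Real.pi), |φ t - 1| := by
    have hone : (1:ℝ) = (1/(2*Real.pi)) * ∫ t in (0:ℝ)..(2*Real.pi), (1:ℝ) := by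
      rw [intervalIntegral.integral_const]
      simp only [smul_eq_mul, sub_zero, mul_one]
      field_simp
    have hsub : (1 / (2*Real.pi)) * (∫ t in (0:ℝ)..(2*Real.pi), φ t) - 1
        = (1/(2*Real.pi)) * ∫ t in (0:ℝ)..(2*Real.pi), (φ t - 1) := by
      rw [intervalIntegral.integral_sub (hφcont.intervalIntegrable _ _)
        (continuous_const.intervalIntegrable _ _)]
      rw [intervalIntegral.integral_const]
      simp only [smul_eq_mul, sub_zero, mul_one]
      field_simp
    rw [hsub, abs_mul, _root_.abs_of_pos (by positivity : (0:ℝ) < 1/(2*Real.pi))]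
    apply mul_le_mul_of_nonneg_left _ (by positivity)
    exact intervalIntegral.abs_integral_le_integral_abs (by positivity)
  rw [Real.dist_eq]
  calc |(1 / (2*Real.pi)) * (∫ t in (0:ℝ)..(2*Real.pi), φ t) - 1|
      ≤ (1/(2*Real.pi)) * ∫ t in (0:ℝ)..(2*Real.pi), |φ t - 1| := habs
  _ ≤ (1/(2*Real.pi)) * (2*Real.pi * (ε/4) + (1/ε) * (2*Real.pi * (24 / Real.sqrt n))) := by
      apply mul_le_mul_of_nonneg_left _ (by positivity)
      refine le_trans hmono ?_
      rw [hrhs]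
      have hd : (1/ε) * (∫ t in (0:ℝ)..(2*Real.pi), (φ t^2 - 1)^2)
          ≤ (1/ε) * (2*Real.pi * (24/Real.sqrt n)) :=
        mul_le_mul_of_nonneg_left hquad (by positivity)
      linarith
  _ = ε/4 + 24/(Real.sqrt n * ε) := by field_simp
  _ < ε := by
      have h24 : 24/(Real.sqrt n * ε) < (3/4)*ε := by
        rw [div_lt_iff₀ (by positivity)]
        have hεsq : 32/ε^2 * (ε^2) = 32 := by field_simp
        have h32 : 32 < Real.sqrt n * ε^2 := by
          have := mul_lt_mul_of_pos_right hsqrt_big (by positivity : (0:ℝ) < ε^2)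
          calc (32:ℝ) = 32/ε^2 * ε^2 := by field_simp
          _ < Real.sqrt n * ε^2 := this
        nlinarith
      linarith
end

section
/- There exists an absolute constant C > 1 such that for every sequence (c_j)_{j≥0} of complex numbers of modulus 1 and every n ∈ ℕ there exists m ≥ n with ‖∑_{j=0}^{m−1} c_j z^j‖₄ > C √m, where the L⁴ norm is taken over the unit circle with normalized Lebesgue measure. -/
open Filter MeasureTheory Finset Complex

noncomputable def sc (c : ℕ → ℂ) (k t : ℕ) : ℂ :=
  ∑ j ∈ Finset.range t, c j * (starRingEnd ℂ) (c (j + k))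

noncomputable def fns (c : ℕ → ℂ) (k t : ℕ) : ℝ := Complex.normSq (sc c k t)

def quadSet (N M : ℕ) : Finset ((ℕ × ℕ) × ℕ × ℕ) :=
  ((Finset.range N ×ˢ Finset.range N) ×ˢ Finset.range M ×ˢ Finset.range M).filter
    fun q => q.1.1 + q.2.1 = q.1.2 + q.2.2

noncomputable def Gc (c : ℕ → ℂ) (N M : ℕ) : ℂ :=
  ∑ q ∈ quadSet N M,
    c q.1.1 * (starRingEnd ℂ) (c q.1.2) * (c q.2.1 * (starRingEnd ℂ) (c q.2.2))

noncomputable def Phi (c : ℕ → ℂ) (m : ℕ) : ℝ :=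
  ∑ k ∈ Finset.Ioc 0 (m - 1), fns c k (m - k)

lemma fns_nonneg (c : ℕ → ℂ) (k t : ℕ) : 0 ≤ fns c k t := Complex.normSq_nonneg _

lemma Phi_nonneg (c : ℕ → ℂ) (m : ℕ) : 0 ≤ Phi c m :=
  Finset.sum_nonneg fun k _ => fns_nonneg c k _

lemma sc_zero (c : ℕ → ℂ) (hc : ∀ j, ‖c j‖ = 1) (t : ℕ) : sc c 0 t = t := by
  have : ∀ j, c j * (starRingEnd ℂ) (c j) = 1 := by
    intro j
    rw [Complex.mul_conj]
    norm_cast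
    rw [← Complex.sq_norm, hc j]; norm_num
  simp [sc, this]

lemma sc_def (c : ℕ → ℂ) (k t : ℕ) :
    sc c k t = ∑ j ∈ Finset.range t, c j * (starRingEnd ℂ) (c (j + k)) := rfl

lemma fns_def (c : ℕ → ℂ) (k t : ℕ) : (fns c k t : ℂ) = (starRingEnd ℂ) (sc c k t) * sc c k t := by
  rw [mul_comm, Complex.mul_conj, fns]

lemma aux1 (c : ℕ → ℂ) (k t : ℕ) : ∑ x ∈ Finset.range t ×ˢ Finset.range t,
    (starRingEnd ℂ) (c x.1 * (starRingEnd ℂ) (c (x.1 + k))) * (c x.2 * (starRingEnd ℂ) (c (x.2 + k)))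
    = ((fns c k t : ℝ) : ℂ) := by
  rw [Finset.sum_product]; dsimp only; rw [← Finset.sum_mul_sum, ← map_sum, ← sc_def]; exact (fns_def c k t).symm

lemma aux2 (c : ℕ → ℂ) (k t : ℕ) : ∑ x ∈ Finset.range t ×ˢ Finset.range t,
    (c x.1 * (starRingEnd ℂ) (c (x.1 + k))) * (starRingEnd ℂ) (c x.2 * (starRingEnd ℂ) (c (x.2 + k)))
    = ((fns c k t : ℝ) : ℂ) := by
  rw [Finset.sum_product]; dsimp only; rw [← Finset.sum_mul_sum, ← map_sum, ← sc_def, Complex.mul_conj]; rfl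

lemma groupB (c : ℕ → ℂ) (N M : ℕ) (h : N ≤ M) :
    Gc c N M =
      ((∑ k ∈ Finset.range N, fns c k (N - k)
        + ∑ k ∈ Finset.Ioc 0 (M - 1), fns c k (min N (M - k)) : ℝ) : ℂ) := by
  have step1 : ∑ q ∈ (quadSet N M).filter (fun q => q.2.2 ≤ q.1.1),
      c q.1.1 * (starRingEnd ℂ) (c q.1.2) * (c q.2.1 * (starRingEnd ℂ) (c q.2.2))
      = ∑ x ∈ (Finset.range N).sigma
          (fun k => Finset.range (N - k) ×ˢ Finset.range (N - k)),
          (starRingEnd ℂ) (c x.2.1 * (starRingEnd ℂ) (c (x.2.1 + x.1)))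
            * (c x.2.2 * (starRingEnd ℂ) (c (x.2.2 + x.1))) := by
    refine Finset.sum_nbij' (fun q => ⟨q.1.1 - q.2.2, q.2.2, q.2.1⟩)
      (fun x => ((x.2.1 + x.1, x.2.2 + x.1), (x.2.2, x.2.1))) ?_ ?_ ?_ ?_ ?_
    · intro q hq
      simp only [quadSet, Finset.mem_filter, Finset.mem_product, Finset.mem_range,
        Finset.mem_sigma] at hq ⊢
      omega
    · intro x hx
      simp only [quadSet, Finset.mem_filter, Finset.mem_product, Finset.mem_range,
        Finset.mem_sigma] at hx ⊢
      omega
    · intro q hq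
      simp only [quadSet, Finset.mem_filter, Finset.mem_product, Finset.mem_range] at hq
      ext <;> simp <;> omega
    · intro x hx
      simp only [quadSet, Finset.mem_filter, Finset.mem_product, Finset.mem_range,
        Finset.mem_sigma] at hx
      simp
    · intro q hq
      simp only [quadSet, Finset.mem_filter, Finset.mem_product, Finset.mem_range] at hq
      simp only [map_mul, Complex.conj_conj]
      have e1 : q.2.2 + (q.1.1 - q.2.2) = q.1.1 := by omega
      have e2 : q.2.1 + (q.1.1 - q.2.2) = q.1.2 := by omega
      rw [e1, e2]; ring
  have step2 : ∑ q ∈ (quadSet N M).filter (fun q => ¬ q.2.2 ≤ q.1.1),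
      c q.1.1 * (starRingEnd ℂ) (c q.1.2) * (c q.2.1 * (starRingEnd ℂ) (c q.2.2))
      = ∑ x ∈ (Finset.Ioc 0 (M - 1)).sigma
          (fun k => Finset.range (min N (M - k)) ×ˢ Finset.range (min N (M - k))),
          (c x.2.1 * (starRingEnd ℂ) (c (x.2.1 + x.1)))
            * (starRingEnd ℂ) (c x.2.2 * (starRingEnd ℂ) (c (x.2.2 + x.1))) := by
    refine Finset.sum_nbij' (fun q => ⟨q.2.2 - q.1.1, q.1.1, q.1.2⟩)
      (fun x => ((x.2.1, x.2.2), (x.2.2 + x.1, x.2.1 + x.1))) ?_ ?_ ?_ ?_ ?_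
    · intro q hq
      simp only [quadSet, Finset.mem_filter, Finset.mem_product, Finset.mem_range,
        Finset.mem_sigma, Finset.mem_Ioc] at hq ⊢
      omega
    · intro x hx
      simp only [quadSet, Finset.mem_filter, Finset.mem_product, Finset.mem_range,
        Finset.mem_sigma, Finset.mem_Ioc] at hx ⊢
      omega
    · intro q hq
      simp only [quadSet, Finset.mem_filter, Finset.mem_product, Finset.mem_range] at hq
      ext <;> simp <;> omega
    · intro x hx
      simp only [quadSet, Finset.mem_filter, Finset.mem_product, Finset.mem_range,
        Finset.mem_sigma, Finset.mem_Ioc] at hx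
      simp
    · intro q hq
      simp only [quadSet, Finset.mem_filter, Finset.mem_product, Finset.mem_range] at hq
      simp only [map_mul, Complex.conj_conj]
      have e1 : q.1.1 + (q.2.2 - q.1.1) = q.2.2 := by omega
      have e2 : q.1.2 + (q.2.2 - q.1.1) = q.2.1 := by omega
      rw [e1, e2]; ring
  have comb := Finset.sum_filter_add_sum_filter_not (quadSet N M) (fun q => q.2.2 ≤ q.1.1)
    (fun q => c q.1.1 * (starRingEnd ℂ) (c q.1.2) * (c q.2.1 * (starRingEnd ℂ) (c q.2.2)))
  rw [Gc, ← comb, step1, step2]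
  push_cast
  congr 1
  · rw [Finset.sum_sigma]
    exact Finset.sum_congr rfl fun k _ => aux1 c k (N - k)
  · rw [Finset.sum_sigma]
    exact Finset.sum_congr rfl fun k _ => aux2 c k (min N (M - k))

lemma aux3 (c : ℕ → ℂ) (k t u : ℕ) : ∑ x ∈ Finset.range t ×ˢ Finset.range u,
    (starRingEnd ℂ) (c x.1 * (starRingEnd ℂ) (c (x.1 + k))) * (c x.2 * (starRingEnd ℂ) (c (x.2 + k)))
    = (starRingEnd ℂ) (sc c k t) * sc c k u := by
  rw [Finset.sum_product]; dsimp only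
  rw [← Finset.sum_mul_sum, ← map_sum, ← sc_def, ← sc_def]

lemma aux4 (c : ℕ → ℂ) (k t u : ℕ) : ∑ x ∈ Finset.range t ×ˢ Finset.range u,
    (c x.1 * (starRingEnd ℂ) (c (x.1 + k))) * (starRingEnd ℂ) (c x.2 * (starRingEnd ℂ) (c (x.2 + k)))
    = sc c k t * (starRingEnd ℂ) (sc c k u) := by
  rw [Finset.sum_product]; dsimp only
  rw [← Finset.sum_mul_sum, ← map_sum, ← sc_def, ← sc_def]

lemma groupA (c : ℕ → ℂ) (N M : ℕ) (h : N ≤ M) :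
    Gc c N M =
      ∑ d ∈ Finset.range N, (starRingEnd ℂ) (sc c d (N - d)) * sc c d (M - d)
      + ∑ d ∈ Finset.Ioc 0 (N - 1), sc c d (N - d) * (starRingEnd ℂ) (sc c d (M - d)) := by
  have step1 : ∑ q ∈ (quadSet N M).filter (fun q => q.1.2 ≤ q.1.1),
      c q.1.1 * (starRingEnd ℂ) (c q.1.2) * (c q.2.1 * (starRingEnd ℂ) (c q.2.2))
      = ∑ x ∈ (Finset.range N).sigma
          (fun d => Finset.range (N - d) ×ˢ Finset.range (M - d)),
          (starRingEnd ℂ) (c x.2.1 * (starRingEnd ℂ) (c (x.2.1 + x.1)))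
            * (c x.2.2 * (starRingEnd ℂ) (c (x.2.2 + x.1))) := by
    refine Finset.sum_nbij' (fun q => ⟨q.1.1 - q.1.2, q.1.2, q.2.1⟩)
      (fun x => ((x.2.1 + x.1, x.2.1), (x.2.2, x.2.2 + x.1))) ?_ ?_ ?_ ?_ ?_
    · intro q hq
      simp only [quadSet, Finset.mem_filter, Finset.mem_product, Finset.mem_range,
        Finset.mem_sigma] at hq ⊢
      omega
    · intro x hx
      simp only [quadSet, Finset.mem_filter, Finset.mem_product, Finset.mem_range,
        Finset.mem_sigma] at hx ⊢
      omega
    · intro q hq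
      simp only [quadSet, Finset.mem_filter, Finset.mem_product, Finset.mem_range] at hq
      ext <;> simp <;> omega
    · intro x hx
      simp only [quadSet, Finset.mem_filter, Finset.mem_product, Finset.mem_range,
        Finset.mem_sigma] at hx
      simp
    · intro q hq
      simp only [quadSet, Finset.mem_filter, Finset.mem_product, Finset.mem_range] at hq
      simp only [map_mul, Complex.conj_conj]
      have e1 : q.1.2 + (q.1.1 - q.1.2) = q.1.1 := by omega
      have e2 : q.2.1 + (q.1.1 - q.1.2) = q.2.2 := by omega
      rw [e1, e2]; ring
  have step2 : ∑ q ∈ (quadSet N M).filter (fun q => ¬ q.1.2 ≤ q.1.1),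
      c q.1.1 * (starRingEnd ℂ) (c q.1.2) * (c q.2.1 * (starRingEnd ℂ) (c q.2.2))
      = ∑ x ∈ (Finset.Ioc 0 (N - 1)).sigma
          (fun d => Finset.range (N - d) ×ˢ Finset.range (M - d)),
          (c x.2.1 * (starRingEnd ℂ) (c (x.2.1 + x.1)))
            * (starRingEnd ℂ) (c x.2.2 * (starRingEnd ℂ) (c (x.2.2 + x.1))) := by
    refine Finset.sum_nbij' (fun q => ⟨q.1.2 - q.1.1, q.1.1, q.2.2⟩)
      (fun x => ((x.2.1, x.2.1 + x.1), (x.2.2 + x.1, x.2.2))) ?_ ?_ ?_ ?_ ?_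
    · intro q hq
      simp only [quadSet, Finset.mem_filter, Finset.mem_product, Finset.mem_range,
        Finset.mem_sigma, Finset.mem_Ioc] at hq ⊢
      omega
    · intro x hx
      simp only [quadSet, Finset.mem_filter, Finset.mem_product, Finset.mem_range,
        Finset.mem_sigma, Finset.mem_Ioc] at hx ⊢
      omega
    · intro q hq
      simp only [quadSet, Finset.mem_filter, Finset.mem_product, Finset.mem_range] at hq
      ext <;> simp <;> omega
    · intro x hx
      simp only [quadSet, Finset.mem_filter, Finset.mem_product, Finset.mem_range,
        Finset.mem_sigma, Finset.mem_Ioc] at hx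
      simp
    · intro q hq
      simp only [quadSet, Finset.mem_filter, Finset.mem_product, Finset.mem_range] at hq
      simp only [map_mul, Complex.conj_conj]
      have e1 : q.1.1 + (q.1.2 - q.1.1) = q.1.2 := by omega
      have e2 : q.2.2 + (q.1.2 - q.1.1) = q.2.1 := by omega
      rw [e1, e2]; ring
  have comb := Finset.sum_filter_add_sum_filter_not (quadSet N M) (fun q => q.1.2 ≤ q.1.1)
    (fun q => c q.1.1 * (starRingEnd ℂ) (c q.1.2) * (c q.2.1 * (starRingEnd ℂ) (c q.2.2)))
  rw [Gc, ← comb, step1, step2]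
  congr 1
  · rw [Finset.sum_sigma]
    exact Finset.sum_congr rfl fun d _ => aux3 c d (N - d) (M - d)
  · rw [Finset.sum_sigma]
    exact Finset.sum_congr rfl fun d _ => aux4 c d (N - d) (M - d)

lemma key_int (z : ℤ) :
    ∫ t in (0:ℝ)..(2 * Real.pi), Complex.exp (Complex.I * t * z)
      = if z = 0 then ((2 * Real.pi : ℝ) : ℂ) else 0 := by
  rcases eq_or_ne z 0 with hz | hz
  · simp [hz, Real.two_pi_pos.le]
  · rw [if_neg hz]
    have h0 : (Complex.I * z) ≠ 0 := by
      simp [Complex.I_ne_zero, Complex.ext_iff]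
      exact_mod_cast hz
    have : ∀ t : ℝ, Complex.I * t * z = (Complex.I * z) * t := by intro t; ring
    simp_rw [this]
    rw [integral_exp_mul_complex h0]
    have h1 : Complex.I * z * (2 * Real.pi : ℝ) = (z : ℂ) * (2 * Real.pi * Complex.I) := by
      push_cast; ring
    rw [h1, Complex.exp_int_mul_two_pi_mul_I]
    simp

lemma expand_pt (c : ℕ → ℂ) (m : ℕ) (t : ℝ) :
    (let P := ∑ j ∈ Finset.range m, c j * Complex.exp (Complex.I * (t : ℂ)) ^ j;
      (P * (starRingEnd ℂ) P) * (P * (starRingEnd ℂ) P))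
    = ∑ q ∈ (Finset.range m ×ˢ Finset.range m) ×ˢ Finset.range m ×ˢ Finset.range m,
        c q.1.1 * (starRingEnd ℂ) (c q.1.2) * (c q.2.1 * (starRingEnd ℂ) (c q.2.2))
          * Complex.exp (Complex.I * t *
              (((q.1.1 : ℤ) + q.2.1 - q.1.2 - q.2.2 : ℤ) : ℂ)) := by
  have hP : (∑ j ∈ Finset.range m, c j * Complex.exp (Complex.I * (t : ℂ)) ^ j)
      = ∑ j ∈ Finset.range m, c j * Complex.exp ((j : ℂ) * (Complex.I * t)) := by
    refine Finset.sum_congr rfl fun j _ => ?_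
    rw [Complex.exp_nat_mul]
  have hPc : (starRingEnd ℂ) (∑ j ∈ Finset.range m, c j * Complex.exp (Complex.I * (t : ℂ)) ^ j)
      = ∑ j ∈ Finset.range m, (starRingEnd ℂ) (c j) * Complex.exp ((j : ℂ) * (-(Complex.I * t))) := by
    rw [map_sum]
    refine Finset.sum_congr rfl fun j _ => ?_
    rw [map_mul, map_pow, ← Complex.exp_conj]
    rw [Complex.exp_nat_mul]
    congr 2
    simp [Complex.ext_iff]
  simp only []
  rw [hPc, hP]
  rw [Finset.sum_mul_sum, ← Finset.sum_product', Finset.sum_mul_sum, ← Finset.sum_product']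
  refine Finset.sum_congr rfl fun q hq => ?_
  have hx : Complex.exp (Complex.I * t * (((q.1.1 : ℤ) + q.2.1 - q.1.2 - q.2.2 : ℤ) : ℂ))
      = Complex.exp ((q.1.1 : ℂ) * (Complex.I * t)) * Complex.exp ((q.2.1 : ℂ) * (Complex.I * t))
        * (Complex.exp ((q.1.2 : ℂ) * -(Complex.I * t)) * Complex.exp ((q.2.2 : ℂ) * -(Complex.I * t))) := by
    rw [← Complex.exp_add, ← Complex.exp_add, ← Complex.exp_add]
    congr 1
    push_cast
    ring
  rw [hx]
  ring

lemma cont_term (c : ℕ → ℂ) (q : (ℕ × ℕ) × ℕ × ℕ) :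
    Continuous (fun t : ℝ =>
      c q.1.1 * (starRingEnd ℂ) (c q.1.2) * (c q.2.1 * (starRingEnd ℂ) (c q.2.2))
        * Complex.exp (Complex.I * t * (((q.1.1 : ℤ) + q.2.1 - q.1.2 - q.2.2 : ℤ) : ℂ))) := by
  fun_prop

lemma integral_eq (c : ℕ → ℂ) (m : ℕ) :
    (1 / (2 * Real.pi)) * ∫ t in (0:ℝ)..(2 * Real.pi),
        ‖(∑ j ∈ Finset.range m, c j * Complex.exp (Complex.I * (t:ℂ)) ^ j)‖ ^ 4
      = (Gc c m m).re := by
  have habs : ∀ z : ℂ, ‖z‖^4 = (z * (starRingEnd ℂ) z * (z * (starRingEnd ℂ) z)).re := by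
    intro z
    rw [Complex.mul_conj, ← Complex.ofReal_mul, Complex.ofReal_re, ← Complex.sq_norm]
    ring
  set QQ := (Finset.range m ×ˢ Finset.range m) ×ˢ Finset.range m ×ˢ Finset.range m with hQQ
  set F : ℝ → ℂ := fun t =>
    (∑ j ∈ Finset.range m, c j * Complex.exp (Complex.I * (t:ℂ)) ^ j)
      * (starRingEnd ℂ) (∑ j ∈ Finset.range m, c j * Complex.exp (Complex.I * (t:ℂ)) ^ j)
      * ((∑ j ∈ Finset.range m, c j * Complex.exp (Complex.I * (t:ℂ)) ^ j)
        * (starRingEnd ℂ) (∑ j ∈ Finset.range m, c j * Complex.exp (Complex.I * (t:ℂ)) ^ j)) with hFdef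
  have hFeq : ∀ t : ℝ, F t = ∑ q ∈ QQ,
      c q.1.1 * (starRingEnd ℂ) (c q.1.2) * (c q.2.1 * (starRingEnd ℂ) (c q.2.2))
        * Complex.exp (Complex.I * t * (((q.1.1 : ℤ) + q.2.1 - q.1.2 - q.2.2 : ℤ) : ℂ)) := by
    intro t
    exact expand_pt c m t
  have hFcont : Continuous F := by
    have hP : Continuous (fun t : ℝ => ∑ j ∈ Finset.range m,
        c j * Complex.exp (Complex.I * (t:ℂ)) ^ j) := by fun_prop
    exact (hP.mul (continuous_star.comp hP)).mul (hP.mul (continuous_star.comp hP))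
  have h1 : (∫ t in (0:ℝ)..(2 * Real.pi), F t) = ((2 * Real.pi : ℝ) : ℂ) * Gc c m m := by
    rw [intervalIntegral.integral_congr (g := fun t => ∑ q ∈ QQ,
      c q.1.1 * (starRingEnd ℂ) (c q.1.2) * (c q.2.1 * (starRingEnd ℂ) (c q.2.2))
        * Complex.exp (Complex.I * t * (((q.1.1 : ℤ) + q.2.1 - q.1.2 - q.2.2 : ℤ) : ℂ)))
      (fun t _ => hFeq t)]
    rw [intervalIntegral.integral_finset_sum (fun q _ => (cont_term c q).intervalIntegrable _ _)]
    have : ∀ q ∈ QQ, (∫ t in (0:ℝ)..(2 * Real.pi),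
        c q.1.1 * (starRingEnd ℂ) (c q.1.2) * (c q.2.1 * (starRingEnd ℂ) (c q.2.2))
          * Complex.exp (Complex.I * t * (((q.1.1 : ℤ) + q.2.1 - q.1.2 - q.2.2 : ℤ) : ℂ)))
        = if ((q.1.1 : ℤ) + q.2.1 - q.1.2 - q.2.2 : ℤ) = 0 then
            c q.1.1 * (starRingEnd ℂ) (c q.1.2) * (c q.2.1 * (starRingEnd ℂ) (c q.2.2))
              * ((2 * Real.pi : ℝ) : ℂ) else 0 := by
      intro q _
      rw [intervalIntegral.integral_const_mul, key_int]
      split_ifs <;> simp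
    rw [Finset.sum_congr rfl this]
    rw [Finset.sum_ite, Finset.sum_const_zero, add_zero]
    have hfilt : QQ.filter (fun q => ((q.1.1 : ℤ) + q.2.1 - q.1.2 - q.2.2 : ℤ) = 0) = quadSet m m := by
      rw [quadSet, hQQ]
      refine Finset.filter_congr fun q _ => ?_
      constructor <;> intro h' <;> omega
    rw [hfilt, Gc, ← Finset.sum_mul, mul_comm]
  have h2 : (∫ t in (0:ℝ)..(2 * Real.pi),
      ‖(∑ j ∈ Finset.range m, c j * Complex.exp (Complex.I * (t:ℂ)) ^ j)‖ ^ 4)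
      = (∫ t in (0:ℝ)..(2 * Real.pi), F t).re := by
    have hcomm := Complex.reCLM.intervalIntegral_comp_comm (μ := MeasureTheory.volume)
      (a := (0:ℝ)) (b := 2 * Real.pi) (hFcont.intervalIntegrable _ _)
    calc (∫ t in (0:ℝ)..(2 * Real.pi),
        ‖(∑ j ∈ Finset.range m, c j * Complex.exp (Complex.I * (t:ℂ)) ^ j)‖ ^ 4)
        = ∫ t in (0:ℝ)..(2 * Real.pi), Complex.reCLM (F t) := by
          refine intervalIntegral.integral_congr fun t _ => ?_
          simp only [Complex.reCLM_apply]
          exact habs _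
      _ = Complex.reCLM (∫ t in (0:ℝ)..(2 * Real.pi), F t) := hcomm
      _ = (∫ t in (0:ℝ)..(2 * Real.pi), F t).re := rfl
  rw [h2, h1, Complex.re_ofReal_mul]
  have hpi : (2 * Real.pi) ≠ 0 := by positivity
  field_simp

lemma re_bound (a b : ℂ) (u v : ℝ) (hu : 0 ≤ u) (hv : 0 ≤ v) :
    -(u^2 * Complex.normSq a + v^2 * Complex.normSq b) ≤
      (2*u*v) * ((starRingEnd ℂ) a * b).re := by
  have h1 : -‖(starRingEnd ℂ) a * b‖ ≤ ((starRingEnd ℂ) a * b).re := by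
    have := Complex.abs_re_le_norm ((starRingEnd ℂ) a * b)
    cases abs_le.mp this; linarith
  have h2 : ‖(starRingEnd ℂ) a * b‖ = ‖a‖ * ‖b‖ := by
    rw [norm_mul, Complex.norm_conj]
  have h3 : Complex.normSq a = ‖a‖ ^ 2 := (Complex.sq_norm a).symm
  have h4 : Complex.normSq b = ‖b‖ ^ 2 := (Complex.sq_norm b).symm
  have h5 : 0 ≤ ‖a‖ := norm_nonneg a
  have h6 : 0 ≤ ‖b‖ := norm_nonneg b
  have h7 : 0 ≤ ((starRingEnd ℂ) a * b).re + ‖a‖ * ‖b‖ := by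
    rw [← h2]; linarith
  have h8 : 0 ≤ (2*u*v) * (((starRingEnd ℂ) a * b).re + ‖a‖ * ‖b‖) := by
    have : (0:ℝ) ≤ 2*u*v := by positivity
    exact mul_nonneg this h7
  nlinarith [h8, sq_nonneg (u * ‖a‖ - v * ‖b‖)]

lemma re_bound' (a b : ℂ) (u v : ℝ) (hu : 0 ≤ u) (hv : 0 ≤ v) :
    -(u^2 * Complex.normSq a + v^2 * Complex.normSq b) ≤
      (2*u*v) * (a * (starRingEnd ℂ) b).re := by
  have : (a * (starRingEnd ℂ) b).re = ((starRingEnd ℂ) a * b).re := by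
    rw [← Complex.conj_re ((starRingEnd ℂ) a * b), map_mul, Complex.conj_conj, mul_comm]
  rw [this]
  exact re_bound a b u v hu hv

set_option maxHeartbeats 2000000 in
lemma main_contra (c : ℕ → ℂ) (hc : ∀ j, ‖c j‖ = 1) (n' : ℕ) (hn : 1 ≤ n')
    (hflat : ∀ m, n' ≤ m → (Gc c m m).re ≤ (201/200 : ℝ) * (m:ℝ)^2) : False := by
  set K := n' + 1 with hK
  set M := 8 * K with hM
  have hn'M : n' < M := by omega
  -- Phi bound
  have hphi : ∀ m, n' ≤ m → Phi c m ≤ (m:ℝ)^2 / 400 := by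
    intro m hm
    have h1 : 1 ≤ m := le_trans hn hm
    have hrange : Finset.range m = insert 0 (Finset.Ioc 0 (m-1)) := by
      ext x; simp only [Finset.mem_range, Finset.mem_Ioc, Finset.mem_insert]; omega
    have hGm := groupB c m m (le_refl m)
    have hre : (Gc c m m).re = (∑ k ∈ Finset.range m, fns c k (m - k)
        + ∑ k ∈ Finset.Ioc 0 (m-1), fns c k (min m (m - k))) := by
      rw [hGm, Complex.ofReal_re]
    have e1 : ∑ k ∈ Finset.range m, fns c k (m - k) = (m:ℝ)^2 + Phi c m := by
      rw [hrange, Finset.sum_insert (by simp)]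
      have h0 : fns c 0 (m - 0) = (m:ℝ)^2 := by
        rw [Nat.sub_zero, fns, sc_zero c hc, Complex.normSq_natCast]
        push_cast; ring
      rw [h0, Phi]
    have e2 : ∑ k ∈ Finset.Ioc 0 (m-1), fns c k (min m (m - k)) = Phi c m := by
      rw [Phi]
      exact Finset.sum_congr rfl fun k hk => by rw [Nat.min_eq_right (Nat.sub_le m k)]
    have hf := hflat m hm
    rw [hre, e1, e2] at hf
    linarith
  -- Row lower bound
  have hrow : ∀ N, n' ≤ N → N < M →
      (N:ℝ) * ((M:ℝ) - N) - (M:ℝ)^2/100 ≤ ∑ k ∈ Finset.Ioc 0 (M - N), fns c k N := by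
    intro N hN hNM
    have hN1 : 1 ≤ N := le_trans hn hN
    have hNle : N ≤ M := hNM.le
    have hNr : (1:ℝ) ≤ N := by exact_mod_cast hN1
    have hNMr : (N:ℝ) ≤ M := by exact_mod_cast hNle
    have hMr : (0:ℝ) < M := by positivity
    have hrangeN : Finset.range N = insert 0 (Finset.Ioc 0 (N-1)) := by
      ext x; simp only [Finset.mem_range, Finset.mem_Ioc, Finset.mem_insert]; omega
    -- tail sums bounded by Phi M
    have htail1 : ∑ d ∈ Finset.Ioc 0 (N-1), fns c d (M - d) ≤ Phi c M := by
      rw [Phi]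
      refine Finset.sum_le_sum_of_subset_of_nonneg ?_ (fun k _ _ => fns_nonneg c k _)
      exact Finset.Ioc_subset_Ioc le_rfl (by omega)
    -- groupA lower bound
    have hreA : -(2*((M:ℝ)^2 * Phi c N + (N:ℝ)^2 * Phi c M)) ≤
        (2*(M:ℝ)*N) * ((Gc c N M).re - (N:ℝ)*M) := by
      have hA := groupA c N M hNle
      have : (Gc c N M).re = (N:ℝ)*M
          + (∑ d ∈ Finset.Ioc 0 (N-1), ((starRingEnd ℂ) (sc c d (N - d)) * sc c d (M - d)).re
          + ∑ d ∈ Finset.Ioc 0 (N-1), (sc c d (N - d) * (starRingEnd ℂ) (sc c d (M - d))).re) := by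
        rw [hA, Complex.add_re, Complex.re_sum, Complex.re_sum, hrangeN,
          Finset.sum_insert (by simp)]
        have h00 : ((starRingEnd ℂ) (sc c 0 (N - 0)) * sc c 0 (M - 0)).re = (N:ℝ) * M := by
          rw [Nat.sub_zero, Nat.sub_zero, sc_zero c hc, sc_zero c hc]
          have : ((N:ℕ):ℂ) = ((N:ℝ):ℂ) := by norm_cast
          rw [this, show ((M:ℕ):ℂ) = ((M:ℝ):ℂ) by norm_cast, Complex.conj_ofReal,
            ← Complex.ofReal_mul, Complex.ofReal_re]
        rw [h00]; ring
      rw [this]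
      have lhs_eq : ∑ d ∈ Finset.Ioc 0 (N-1),
            -((M:ℝ)^2 * fns c d (N - d) + (N:ℝ)^2 * fns c d (M - d))
          = -((M:ℝ)^2 * Phi c N
              + (N:ℝ)^2 * (∑ d ∈ Finset.Ioc 0 (N-1), fns c d (M - d))) := by
        rw [Phi, Finset.mul_sum, Finset.mul_sum]
        rw [← Finset.sum_add_distrib, ← Finset.sum_neg_distrib]
      have hb1 : -((M:ℝ)^2 * Phi c N + (N:ℝ)^2 * (∑ d ∈ Finset.Ioc 0 (N-1), fns c d (M - d)))
          ≤ (2*(M:ℝ)*N) * ∑ d ∈ Finset.Ioc 0 (N-1),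
              ((starRingEnd ℂ) (sc c d (N - d)) * sc c d (M - d)).re := by
        conv_rhs => rw [Finset.mul_sum]
        rw [← lhs_eq]
        refine Finset.sum_le_sum fun d _ => ?_
        exact re_bound _ _ (M:ℝ) (N:ℝ) hMr.le (by positivity)
      have hb2 : -((M:ℝ)^2 * Phi c N + (N:ℝ)^2 * (∑ d ∈ Finset.Ioc 0 (N-1), fns c d (M - d)))
          ≤ (2*(M:ℝ)*N) * ∑ d ∈ Finset.Ioc 0 (N-1),
              (sc c d (N - d) * (starRingEnd ℂ) (sc c d (M - d))).re := by
        conv_rhs => rw [Finset.mul_sum]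
        rw [← lhs_eq]
        refine Finset.sum_le_sum fun d _ => ?_
        exact re_bound' _ _ (M:ℝ) (N:ℝ) hMr.le (by positivity)
      have hPM : 0 ≤ Phi c M := Phi_nonneg c M
      have hPN : 0 ≤ Phi c N := Phi_nonneg c N
      have ht1 : ∑ d ∈ Finset.Ioc 0 (N-1), fns c d (M - d) ≤ Phi c M := htail1
      have hN2 : (0:ℝ) ≤ (N:ℝ)^2 := sq_nonneg _
      nlinarith [hb1, hb2, ht1, hN2]
    -- groupB decomposition
    have hreB : ∑ k ∈ Finset.Ioc 0 (M - N), fns c k N ≥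
        (Gc c N M).re - (N:ℝ)^2 - Phi c N - Phi c M := by
      have hB := groupB c N M hNle
      have hre : (Gc c N M).re = (∑ k ∈ Finset.range N, fns c k (N - k)
          + ∑ k ∈ Finset.Ioc 0 (M-1), fns c k (min N (M - k))) := by
        rw [hB, Complex.ofReal_re]
      have e1 : ∑ k ∈ Finset.range N, fns c k (N - k) = (N:ℝ)^2 + Phi c N := by
        rw [hrangeN, Finset.sum_insert (by simp)]
        have h0 : fns c 0 (N - 0) = (N:ℝ)^2 := by
          rw [Nat.sub_zero, fns, sc_zero c hc, Complex.normSq_natCast]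
          push_cast; ring
        rw [h0, Phi]
      have esplit : ∑ k ∈ Finset.Ioc 0 (M-1), fns c k (min N (M - k))
          = ∑ k ∈ Finset.Ioc 0 (M - N), fns c k (min N (M - k))
            + ∑ k ∈ Finset.Ioc (M - N) (M-1), fns c k (min N (M - k)) := by
        rw [Finset.sum_Ioc_consecutive _ (by omega : 0 ≤ M - N) (by omega : M - N ≤ M - 1)]
      have e2 : ∑ k ∈ Finset.Ioc 0 (M - N), fns c k (min N (M - k))
          = ∑ k ∈ Finset.Ioc 0 (M - N), fns c k N := by
        refine Finset.sum_congr rfl fun k hk => ?_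
        simp only [Finset.mem_Ioc] at hk
        rw [Nat.min_eq_left (by omega)]
      have e3 : ∑ k ∈ Finset.Ioc (M - N) (M-1), fns c k (min N (M - k)) ≤ Phi c M := by
        rw [Phi]
        have : ∀ k ∈ Finset.Ioc (M - N) (M-1), fns c k (min N (M - k)) = fns c k (M - k) := by
          intro k hk
          simp only [Finset.mem_Ioc] at hk
          rw [Nat.min_eq_right (by omega)]
        rw [Finset.sum_congr rfl this]
        refine Finset.sum_le_sum_of_subset_of_nonneg ?_ (fun k _ _ => fns_nonneg c k _)
        exact Finset.Ioc_subset_Ioc (by omega) le_rfl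
      rw [e1, esplit, e2] at hre
      linarith [e3, hre]
    -- combine
    have hPN := hphi N hN
    have hPM := hphi M (by omega)
    have hPNn := Phi_nonneg c N
    have hPMn := Phi_nonneg c M
    have hNM2 : (N:ℝ)*M ≤ (M:ℝ)^2 := by nlinarith
    have hN2M2 : (N:ℝ)^2 ≤ (M:ℝ)^2 := by nlinarith
    -- conclude (Gc).re ≥ NM - NM/200
    have h2MN : (0:ℝ) < 2*(M:ℝ)*N := by positivity
    have hq1 : (M:ℝ)^2 * Phi c N ≤ (M:ℝ)^2 * ((N:ℝ)^2/400) :=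
      mul_le_mul_of_nonneg_left hPN (sq_nonneg _)
    have hq2 : (N:ℝ)^2 * Phi c M ≤ (N:ℝ)^2 * ((M:ℝ)^2/400) :=
      mul_le_mul_of_nonneg_left hPM (sq_nonneg _)
    have hX : -((M:ℝ)^2*(N:ℝ)^2/100) ≤ 2*(M:ℝ)*N * ((Gc c N M).re - (N:ℝ)*M) := by
      nlinarith [hreA, hq1, hq2]
    have hG : (Gc c N M).re ≥ (N:ℝ)*M - (N:ℝ)*M/200 := by
      nlinarith [hX, h2MN]
    linarith [hreB, hG, hPNn, hPMn, hNM2, hN2M2, hPN, hPM]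
  -- Upper bound for T
  set T : ℝ := ∑ N ∈ Finset.Ico n' M, ∑ k ∈ Finset.Ioc 0 (M - N), fns c k N with hT
  have hTupper : T ≤ (M:ℝ)^3 / 400 := by
    have hstep1 : T = ∑ x ∈ (Finset.Ico n' M).sigma (fun N => Finset.Ioc 0 (M - N)),
        fns c x.2 x.1 := by
      rw [hT, Finset.sum_sigma]
    have hinj : ∀ x ∈ (Finset.Ico n' M).sigma (fun N => Finset.Ioc 0 (M - N)),
        ∀ y ∈ (Finset.Ico n' M).sigma (fun N => Finset.Ioc 0 (M - N)),
        (fun x : Σ _ : ℕ, ℕ => (⟨x.1 + x.2, x.2⟩ : Σ _ : ℕ, ℕ)) x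
          = (fun x : Σ _ : ℕ, ℕ => (⟨x.1 + x.2, x.2⟩ : Σ _ : ℕ, ℕ)) y → x = y := by
      intro x _ y _ h
      have h2 := congrArg (fun z : Σ _ : ℕ, ℕ => z.2) h
      have h1 := congrArg (fun z : Σ _ : ℕ, ℕ => z.1) h
      dsimp only at h1 h2
      have e1 : x.1 = y.1 := by omega
      exact Sigma.ext e1 (heq_of_eq h2)
    have hstep2 : T = ∑ y ∈ ((Finset.Ico n' M).sigma (fun N => Finset.Ioc 0 (M - N))).image
        (fun x : Σ _ : ℕ, ℕ => (⟨x.1 + x.2, x.2⟩ : Σ _ : ℕ, ℕ)),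
        fns c y.2 (y.1 - y.2) := by
      rw [Finset.sum_image hinj, hstep1]
      refine Finset.sum_congr rfl fun x hx => ?_
      dsimp only
      congr 1
      omega
    have hsubset : ((Finset.Ico n' M).sigma (fun N => Finset.Ioc 0 (M - N))).image
        (fun x : Σ _ : ℕ, ℕ => (⟨x.1 + x.2, x.2⟩ : Σ _ : ℕ, ℕ))
        ⊆ (Finset.Ioc n' M).sigma (fun m => Finset.Ioc 0 (m - 1)) := by
      intro y hy
      simp only [Finset.mem_image, Finset.mem_sigma, Finset.mem_Ico, Finset.mem_Ioc] at hy ⊢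
      obtain ⟨x, ⟨hx1, hx2⟩, rfl⟩ := hy
      dsimp only
      refine ⟨⟨?_, ?_⟩, ?_, ?_⟩ <;> omega
    have hstep3 : T ≤ ∑ y ∈ (Finset.Ioc n' M).sigma (fun m => Finset.Ioc 0 (m - 1)),
        fns c y.2 (y.1 - y.2) := by
      rw [hstep2]
      exact Finset.sum_le_sum_of_subset_of_nonneg hsubset (fun y _ _ => fns_nonneg c _ _)
    have hstep4 : ∑ y ∈ (Finset.Ioc n' M).sigma (fun m => Finset.Ioc 0 (m - 1)),
        fns c y.2 (y.1 - y.2) = ∑ m ∈ Finset.Ioc n' M, Phi c m := by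
      rw [Finset.sum_sigma]
      rfl
    have hstep5 : ∑ m ∈ Finset.Ioc n' M, Phi c m ≤ (M:ℝ)^3/400 := by
      have h1 : ∀ m ∈ Finset.Ioc n' M, Phi c m ≤ ((M:ℝ)^2)/400 := by
        intro m hm
        simp only [Finset.mem_Ioc] at hm
        refine le_trans (hphi m (by omega)) ?_
        have h2 : (m:ℝ) ≤ M := by exact_mod_cast hm.2
        have hm0 : (0:ℝ) ≤ m := by positivity
        nlinarith
      calc ∑ m ∈ Finset.Ioc n' M, Phi c m ≤ (Finset.Ioc n' M).card • (((M:ℝ)^2)/400) :=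
            Finset.sum_le_card_nsmul _ _ _ h1
        _ ≤ (M:ℝ)^3/400 := by
            rw [Nat.card_Ioc, nsmul_eq_mul]
            have h2 : ((M - n' : ℕ):ℝ) ≤ (M:ℝ) := by
              exact_mod_cast Nat.sub_le M n'
            have hM0 : (0:ℝ) ≤ (M:ℝ)^2/400 := by positivity
            nlinarith
    rw [hstep4] at hstep3
    linarith [hstep3, hstep5]
  have hTlower : 14 * (K:ℝ)^3 ≤ T := by
    have hsub : Finset.Ico (2*K) (4*K) ⊆ Finset.Ico n' M := by
      intro x hx; simp only [Finset.mem_Ico] at hx ⊢; omega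
    have h1 : ∑ N ∈ Finset.Ico (2*K) (4*K), ∑ k ∈ Finset.Ioc 0 (M - N), fns c k N ≤ T :=
      Finset.sum_le_sum_of_subset_of_nonneg hsub
        (fun N _ _ => Finset.sum_nonneg fun k _ => fns_nonneg c k N)
    have h2 : ∀ N ∈ Finset.Ico (2*K) (4*K),
        7*(K:ℝ)^2 ≤ ∑ k ∈ Finset.Ioc 0 (M - N), fns c k N := by
      intro N hN
      simp only [Finset.mem_Ico] at hN
      have hrowN := hrow N (by omega) (by omega)
      have hc1 : 2*(K:ℝ) ≤ (N:ℝ) := by exact_mod_cast hN.1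
      have hc2 : (N:ℝ) < 4*(K:ℝ) := by exact_mod_cast hN.2
      have hc3 : (M:ℝ) = 8*(K:ℝ) := by exact_mod_cast hM
      have hK0 : (1:ℝ) ≤ (K:ℝ) := by exact_mod_cast (by omega : 1 ≤ K)
      have hprod : (0:ℝ) ≤ ((N:ℝ) - 2*K) * ((M:ℝ) - (N:ℝ) - 4*K) := by
        apply mul_nonneg <;> linarith
      have hlin : 2*(K:ℝ)*(2*(K:ℝ)) ≤ 2*(K:ℝ)*(N:ℝ) :=
        mul_le_mul_of_nonneg_left hc1 (by positivity)
      nlinarith [hrowN, hprod, hlin]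
    have h3 : (Finset.Ico (2*K) (4*K)).card • (7*(K:ℝ)^2)
        ≤ ∑ N ∈ Finset.Ico (2*K) (4*K), ∑ k ∈ Finset.Ioc 0 (M - N), fns c k N :=
      Finset.card_nsmul_le_sum _ _ _ h2
    rw [Nat.card_Ico, nsmul_eq_mul] at h3
    have h4 : ((4*K - 2*K : ℕ):ℝ) = 2*(K:ℝ) := by
      have : (4*K - 2*K : ℕ) = 2*K := by omega
      rw [this]; push_cast; ring
    rw [h4] at h3
    calc 14*(K:ℝ)^3 = 2*(K:ℝ) * (7*(K:ℝ)^2) := by ring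
      _ ≤ _ := le_trans h3 h1
  have hK1 : (1:ℝ) ≤ K := by exact_mod_cast (by omega : 1 ≤ K)
  have hMK : (M:ℝ) = 8 * K := by exact_mod_cast hM
  have hM3 : (M:ℝ)^3 = 512*(K:ℝ)^3 := by rw [hMK]; ring
  have hK2 : (1:ℝ) ≤ (K:ℝ)^2 := by nlinarith [hK1]
  have hK3 : (1:ℝ) ≤ (K:ℝ)^3 := by nlinarith [hK1, hK2]
  linarith [hTupper, hTlower, hM3, hK3]

lemma Gre_nonneg (c : ℕ → ℂ) (m : ℕ) : 0 ≤ (Gc c m m).re := by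
  rw [groupB c m m le_rfl, Complex.ofReal_re]
  have h1 : 0 ≤ ∑ k ∈ Finset.range m, fns c k (m - k) :=
    Finset.sum_nonneg fun k _ => fns_nonneg c k _
  have h2 : 0 ≤ ∑ k ∈ Finset.Ioc 0 (m - 1), fns c k (min m (m - k)) :=
    Finset.sum_nonneg fun k _ => fns_nonneg c k _
  linarith

/-- There is an absolute constant `C > 1` such that for every
unimodular sequence `(c_j)` and every `n`, some `m ≥ n` satisfies
`‖∑_{j<m} c_j z^j‖₄ > C √m` (norm over the circle with normalized measure). -/
theorem statement19 :
    ∃ C : ℝ, 1 < C ∧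
      ∀ c : ℕ → ℂ, (∀ j : ℕ, ‖c j‖ = 1) →
        ∀ n : ℕ, ∃ m : ℕ, n ≤ m ∧
          C * Real.sqrt m <
            ((1 / (2 * Real.pi)) *
                ∫ t in (0:ℝ)..(2 * Real.pi),
                  ‖(∑ j ∈ Finset.range m, c j * Complex.exp (Complex.I * (t : ℂ)) ^ j)‖ ^ 4) ^
              ((1:ℝ) / 4) := by
  refine ⟨(201/200 : ℝ) ^ ((1:ℝ)/4), ?_, ?_⟩
  · exact (Real.one_lt_rpow_iff_of_pos (by norm_num)).mpr (Or.inl ⟨by norm_num, by norm_num⟩)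
  · intro c hc n
    by_contra hcon
    push_neg at hcon
    refine main_contra c hc (max n 1) (le_max_right n 1) ?_
    intro m hm
    have hnm : n ≤ m := le_trans (le_max_left n 1) hm
    have h := hcon m hnm
    rw [integral_eq c m] at h
    set F := (Gc c m m).re with hF
    have hF0 : 0 ≤ F := Gre_nonneg c m
    have hq0 : (0:ℝ) ≤ F ^ ((1:ℝ)/4) := Real.rpow_nonneg hF0 _
    have h4 : (F ^ ((1:ℝ)/4)) ^ (4:ℕ) ≤ ((201/200 : ℝ) ^ ((1:ℝ)/4) * Real.sqrt m) ^ (4:ℕ) :=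
      pow_le_pow_left₀ hq0 h 4
    have hFid : (F ^ ((1:ℝ)/4)) ^ (4:ℕ) = F := by
      rw [← Real.rpow_natCast (F ^ ((1:ℝ)/4)) 4, ← Real.rpow_mul hF0]
      norm_num
    have hCid : ((201/200 : ℝ) ^ ((1:ℝ)/4)) ^ (4:ℕ) = (201/200 : ℝ) := by
      rw [← Real.rpow_natCast ((201/200 : ℝ) ^ ((1:ℝ)/4)) 4,
        ← Real.rpow_mul (by norm_num : (0:ℝ) ≤ 201/200)]
      norm_num
    have hsid : (Real.sqrt m) ^ (4:ℕ) = (m:ℝ)^2 := by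
      have : (Real.sqrt m) ^ (4:ℕ) = ((Real.sqrt m)^2)^2 := by ring
      rw [this, Real.sq_sqrt (Nat.cast_nonneg m)]
    rw [hFid, mul_pow, hCid, hsid] at h4
    exact h4
end
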